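/- arXiv:2506.16253 — 5 statements merged into one kernel-verified Lean document; each statement's English description precedes it below -/
import Mathlib

section
/- For all integers K ≥ 1 and T ≥ 1, the optimal bookmaking loss L*_{T,K} = V T 0 is the largest real root of the polynomial P_{T,K}; that is, P_{T,K}(V T 0) = 0 and every real x with P_{T,K}(x) = 0 satisfies x ≤ V T 0. -/
open scoped BigOperators

noncomputable section

/-- The probability simplex on `Fin K`. -/
def simplex (K : ℕ) : Set (Fin K → ℝ) :=
  {q | (∀ k, 0 ≤ q k) ∧ ∑ k, q k = 1}

/-- The interior of the probability simplex on `Fin K`. -/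
def simplexInt (K : ℕ) : Set (Fin K → ℝ) :=
  {r | (∀ k, 0 < r k) ∧ ∑ k, r k = 1}

/-- The value function `V K H s` of the online bookmaking game. -/
noncomputable def V (K : ℕ) : ℕ → (Fin K → ℝ) → ℝ
  | 0, s => ⨆ k, s k
  | H + 1, s =>
      sInf ((fun r : Fin K → ℝ =>
        sSup ((fun q : Fin K → ℝ => V K H (fun k => s k + q k / r k)) '' simplex K))
        '' simplexInt K)

/-- Rising factorial `a^{(j)} = a (a+1) ⋯ (a+j-1)`. -/
def rise (a : ℝ) (j : ℕ) : ℝ := ∏ i ∈ Finset.range j, (a + i)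

/-- The polynomial `P_{T,K}(x) = ∑_{m=0}^K (K choose m) (−T)^{(K−m)} x^m`. -/
def P (T K : ℕ) (x : ℝ) : ℝ :=
  ∑ m ∈ Finset.range (K + 1), (K.choose m : ℝ) * rise (-(T : ℝ)) (K - m) * x ^ m


open Polynomial Finset

/-- iterate p ↦ p - p' -/
def G : ℕ → Polynomial ℝ → Polynomial ℝ
  | 0, p => p
  | H+1, p => G H p - (G H p).derivative

lemma G_sub (H : ℕ) (p q : Polynomial ℝ) : G H (p - q) = G H p - G H q := by
  induction H with
  | zero => rfl
  | succ H ih => simp [G, ih, derivative_sub]; ring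

lemma G_C_mul (H : ℕ) (c : ℝ) (p : Polynomial ℝ) : G H (C c * p) = C c * G H p := by
  induction H with
  | zero => rfl
  | succ H ih => simp [G, ih, derivative_C_mul]; ring

lemma G_derivative (H : ℕ) (p : Polynomial ℝ) : G H p.derivative = (G H p).derivative := by
  induction H with
  | zero => rfl
  | succ H ih => simp [G, ih, derivative_sub]

lemma G_comp_sub_C (H : ℕ) (p : Polynomial ℝ) (c : ℝ) :
    G H (p.comp (X - C c)) = (G H p).comp (X - C c) := by
  induction H with
  | zero => rfl
  | succ H ih =>
    simp [G, ih, derivative_comp, Polynomial.derivative_sub, Polynomial.derivative_X,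
      Polynomial.derivative_C, sub_comp]

lemma G_monic (H : ℕ) (p : Polynomial ℝ) (hp : p.Monic) :
    (G H p).Monic ∧ (G H p).natDegree = p.natDegree := by
  induction H with
  | zero => exact ⟨hp, rfl⟩
  | succ H ih =>
    obtain ⟨hm, hdeg⟩ := ih
    have hne : G H p ≠ 0 := hm.ne_zero
    have hlt : ((G H p).derivative).degree < (G H p).degree := degree_derivative_lt hne
    constructor
    · have := hm.add_of_left (q := -(G H p).derivative) (by simpa using hlt)
      simpa [G, sub_eq_add_neg] using this
    · rw [G]
      rw [show (G H p - (G H p).derivative).natDegree = (G H p).natDegree from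
        natDegree_eq_of_degree_eq (degree_sub_eq_left_of_degree_lt hlt)]
      exact hdeg

variable {K : ℕ}

lemma G_add (H : ℕ) (p q : Polynomial ℝ) : G H (p + q) = G H p + G H q := by
  induction H with
  | zero => rfl
  | succ H ih => simp [G, ih, derivative_add]; ring

lemma G_zero (H : ℕ) : G H 0 = 0 := by
  induction H with
  | zero => rfl
  | succ H ih => simp [G, ih]

lemma G_sum {ι : Type*} (H : ℕ) (t : Finset ι) (f : ι → Polynomial ℝ) :
    G H (∑ i ∈ t, f i) = ∑ i ∈ t, G H (f i) := by
  classical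
  induction t using Finset.induction with
  | empty => simp [G_zero]
  | insert _ _ h ih => simp [Finset.sum_insert h, G_add, ih]

lemma derivative_finset_prod {ι : Type*} [DecidableEq ι] (t : Finset ι) (f : ι → Polynomial ℝ) :
    derivative (∏ i ∈ t, f i) = ∑ i ∈ t, (∏ j ∈ t.erase i, f j) * derivative (f i) := by
  induction t using Finset.induction with
  | empty => simp
  | @insert a t ha ih =>
    rw [Finset.prod_insert ha, derivative_mul, ih, Finset.sum_insert ha, Finset.erase_insert ha]
    rw [Finset.mul_sum]
    congr 1
    · ring
    · refine Finset.sum_congr rfl fun i hi => ?_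
      rw [Finset.erase_insert_of_ne (by rintro rfl; exact ha hi)]
      rw [Finset.prod_insert (fun h => ha (Finset.mem_of_mem_erase h))]
      ring

variable {K : ℕ}

def Fp (H : ℕ) (s : Fin K → ℝ) : Polynomial ℝ := G H (∏ k, (X - C (s k)))

def Ak (H : ℕ) (k : Fin K) (s : Fin K → ℝ) : Polynomial ℝ :=
  G H (∏ j ∈ Finset.univ.erase k, (X - C (s j)))

/-- R2 -/
lemma Fp_update (H : ℕ) (s : Fin K → ℝ) (k : Fin K) (u : ℝ) :
    Fp H (fun j => s j + u * (Pi.single k 1 : Fin K → ℝ) j) = Fp H s - C u * Ak H k s := by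
  have hbase : (∏ j, (X - C (s j + u * (Pi.single k 1 : Fin K → ℝ) j)))
      = (∏ j, (X - C (s j))) - C u * ∏ j ∈ Finset.univ.erase k, (X - C (s j)) := by
    rw [← Finset.mul_prod_erase Finset.univ _ (Finset.mem_univ k),
        ← Finset.mul_prod_erase Finset.univ (fun j => X - C (s j)) (Finset.mem_univ k)]
    have h1 : ∀ j ∈ Finset.univ.erase k, (X - C (s j + u * (Pi.single k 1 : Fin K → ℝ) j)) = X - C (s j) := by
      intro j hj
      have : j ≠ k := (Finset.mem_erase.mp hj).1
      simp [Pi.single_eq_of_ne this]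
    rw [Finset.prod_congr rfl h1]
    rw [show s k + u * (Pi.single k 1 : Fin K → ℝ) k = s k + u by simp]
    rw [C_add]
    ring
  rw [Fp, hbase, G_sub, G_C_mul]; rfl

/-- R3 -/
lemma sum_Ak (H : ℕ) (s : Fin K → ℝ) :
    ∑ k, Ak H k s = (Fp H s).derivative := by
  rw [Fp, ← G_derivative, derivative_finset_prod]
  simp only [derivative_sub, derivative_X, derivative_C, sub_zero, mul_one]
  rw [G_sum]
  rfl

lemma Fp_monic (H : ℕ) (s : Fin K → ℝ) : (Fp H s).Monic ∧ (Fp H s).natDegree = K := by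
  have hm : (∏ k : Fin K, (X - C (s k))).Monic :=
    monic_prod_of_monic _ _ fun k _ => monic_X_sub_C (s k)
  have hd : (∏ k : Fin K, (X - C (s k))).natDegree = K := by
    rw [natDegree_prod _ _ fun k _ => X_sub_C_ne_zero (s k)]
    simp
  obtain ⟨h1, h2⟩ := G_monic H _ hm
  exact ⟨h1, h2.trans hd⟩

/-- shift lemma -/
lemma Fp_shift (H : ℕ) (s : Fin K → ℝ) (c : ℝ) :
    Fp H (fun j => s j + c) = (Fp H s).comp (X - C c) := by
  rw [Fp, Fp, ← G_comp_sub_C]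
  congr 1
  rw [Polynomial.prod_comp]
  refine Finset.prod_congr rfl fun k _ => ?_
  rw [sub_comp, X_comp, C_comp, C_add]
  ring

lemma Fp_shift_eval (H : ℕ) (s : Fin K → ℝ) (c x : ℝ) :
    (Fp H (fun j => s j + c)).eval x = (Fp H s).eval (x - c) := by
  rw [Fp_shift]; simp [eval_comp]

/-- eventual positivity of monic polys -/
lemma monic_eventually_pos (p : Polynomial ℝ) (hp : p.Monic) (hd : p.natDegree ≠ 0) :
    ∃ B : ℝ, ∀ x ≥ B, 0 < p.eval x := by
  have h : Filter.Tendsto (fun x => p.eval x) Filter.atTop Filter.atTop := by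
    apply p.tendsto_atTop_of_leadingCoeff_nonneg
    · exact natDegree_pos_iff_degree_pos.mp (Nat.pos_of_ne_zero hd)
    · rw [hp.leadingCoeff]; norm_num
  obtain ⟨B, hB⟩ := (Filter.tendsto_atTop.mp h 1).exists_forall_of_atTop
  exact ⟨B, fun x hx => lt_of_lt_of_le one_pos (hB x hx)⟩

/-- largest root construction -/
lemma largest_root (p : Polynomial ℝ) (hp : p.Monic) (hd : p.natDegree ≠ 0)
    (x₀ : ℝ) (h0 : p.eval x₀ ≤ 0) :
    ∃ z : ℝ, x₀ ≤ z ∧ p.eval z = 0 ∧ ∀ x, z < x → 0 < p.eval x := by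
  obtain ⟨B, hB⟩ := monic_eventually_pos p hp hd
  set S : Set ℝ := {x | p.eval x ≤ 0} with hS
  have hne : S.Nonempty := ⟨x₀, h0⟩
  have hbdd : BddAbove S := by
    refine ⟨B, fun x hx => ?_⟩
    by_contra h
    push_neg at h
    exact absurd hx (not_le.mpr (hB x h.le))
  set z := sSup S with hz
  have hx₀z : x₀ ≤ z := le_csSup hbdd h0
  have hcont : Continuous fun x => p.eval x := p.continuous_aeval
  have hclosed : IsClosed S := isClosed_le hcont continuous_const
  have hmem : z ∈ S := hclosed.csSup_mem hne hbdd
  have hgt : ∀ x, z < x → 0 < p.eval x := by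
    intro x hx
    by_contra h
    exact absurd (le_csSup hbdd (le_of_not_gt h : p.eval x ≤ 0)) (not_le.mpr hx)
  refine ⟨z, hx₀z, le_antisymm hmem ?_, hgt⟩
  by_contra h
  push_neg at h
  have hev : ∀ᶠ x in nhds z, p.eval x < 0 :=
    (hcont.tendsto z).eventually_lt_const h
  obtain ⟨x, hx1, hx2⟩ := ((hev.filter_mono (nhdsWithin_le_nhds (s := Set.Ioi z))).and
    self_mem_nhdsWithin).exists
  exact absurd (hgt x hx2) (not_lt.mpr hx1.le)

lemma rise_zero (a : ℝ) : rise a 0 = 1 := by simp [rise]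
lemma rise_succ (a : ℝ) (j : ℕ) : rise a (j+1) = rise a j * (a + j) := by
  simp [rise, Finset.prod_range_succ]
lemma rise_succ' (a : ℝ) (j : ℕ) : rise (a - 1) (j+1) = (a - 1) * rise a j := by
  rw [rise, Finset.prod_range_succ']
  have h1 : ∀ i ∈ Finset.range j, (a - 1 + ((i+1 : ℕ) : ℝ)) = a + i := by
    intro i _; push_cast; ring
  rw [Finset.prod_congr rfl h1]
  simp [rise, mul_comm]

lemma rise_key (a : ℝ) (j : ℕ) : rise (a-1) (j+1) = rise a (j+1) - (j+1) * rise a j := by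
  rw [rise_succ', rise_succ]; ring

lemma rise_zero_left (j : ℕ) (hj : j ≠ 0) : rise 0 j = 0 := by
  obtain ⟨i, rfl⟩ := Nat.exists_eq_succ_of_ne_zero hj
  rw [rise, Finset.prod_range_succ']
  simp

lemma coeff_step (T K m : ℕ) (hm : m < K) :
    (K.choose m : ℝ) * rise (-(T:ℝ)) (K-m)
      - (K.choose (m+1) : ℝ) * rise (-(T:ℝ)) (K-(m+1)) * (m+1)
      = (K.choose m : ℝ) * rise (-(T:ℝ)-1) (K-m) := by
  obtain ⟨j, hj⟩ : ∃ j, K - m = j + 1 := ⟨K - m - 1, by omega⟩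
  have hj2 : K - (m+1) = j := by omega
  rw [hj, hj2]
  have h := Nat.choose_succ_right_eq K m
  have hc : (K.choose (m+1) : ℝ) * ((m:ℝ)+1) = (K.choose m : ℝ) * ((j:ℝ)+1) := by
    have h' : ((K.choose (m+1) * (m+1) : ℕ) : ℝ) = ((K.choose m * (K - m) : ℕ) : ℝ) := by
      exact_mod_cast congrArg (fun n : ℕ => (n:ℝ)) h
    rw [hj] at h'
    push_cast at h'
    push_cast
    linarith
  linear_combination (-(rise (-(T:ℝ)) j)) * hc - (K.choose m : ℝ) * rise_key (-(T:ℝ)) j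

lemma Fp_zero_eq (T : ℕ) :
    Fp T (0 : Fin K → ℝ) =
      ∑ m ∈ Finset.range (K+1), C ((K.choose m : ℝ) * rise (-(T:ℝ)) (K-m)) * X^m := by
  induction T with
  | zero =>
    have h1 : Fp 0 (0 : Fin K → ℝ) = X^K := by simp [Fp, G]
    rw [h1, Finset.sum_range_succ]
    have h2 : ∀ m ∈ Finset.range K, C ((K.choose m : ℝ) * rise (-((0:ℕ):ℝ)) (K-m)) * X^m
        = 0 := by
      intro m hm
      have h3 : -((0:ℕ):ℝ) = 0 := by norm_num
      rw [h3, rise_zero_left (K-m) (Nat.sub_ne_zero_of_lt (Finset.mem_range.mp hm))]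
      norm_num
    rw [Finset.sum_congr rfl h2]
    simp [rise_zero]
  | succ T ih =>
    have h0 : Fp (T+1) (0 : Fin K → ℝ) = Fp T 0 - (Fp T (0:Fin K → ℝ)).derivative := rfl
    rw [h0, ih, derivative_sum]
    simp only [derivative_C_mul, derivative_X_pow]
    have hd : (∑ m ∈ Finset.range (K+1),
          C ((K.choose m : ℝ) * rise (-(T:ℝ)) (K-m)) * (C (m:ℝ) * X^(m-1)))
        = ∑ m ∈ Finset.range K,
          C ((K.choose (m+1) : ℝ) * rise (-(T:ℝ)) (K-(m+1))) * (C ((m+1:ℕ):ℝ) * X^(m+1-1)) := by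
      rw [Finset.sum_range_succ'
        (fun m => C ((K.choose m : ℝ) * rise (-(T:ℝ)) (K-m)) * (C (m:ℝ) * X^(m-1)))]
      simp only [Nat.cast_zero, map_zero, zero_mul, mul_zero, add_zero]
    rw [hd]
    have hcast : ∀ m : ℕ, rise (-((T+1:ℕ)):ℝ) m = rise (-(T:ℝ)-1) m := by
      intro m; congr 1; push_cast; ring
    rw [Finset.sum_range_succ, Finset.sum_range_succ
      (fun m => C ((K.choose m : ℝ) * rise (-((T+1:ℕ)):ℝ) (K-m)) * X^m)]
    simp only [Nat.sub_self, rise_zero, hcast]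
    rw [add_sub_right_comm]
    congr 1
    rw [← Finset.sum_sub_distrib]
    refine Finset.sum_congr rfl fun m hm => ?_
    have hmK := Finset.mem_range.mp hm
    simp only [Nat.add_sub_cancel]
    rw [← coeff_step T K m hmK]
    push_cast [C_sub, C_mul, C_add]
    ring

def Good (K H : ℕ) : Prop :=
  (∀ s : Fin K → ℝ, (Fp H s).eval (V K H s) = 0) ∧
  (∀ (s : Fin K → ℝ) (x : ℝ), V K H s < x → 0 < (Fp H s).eval x) ∧
  Monotone (V K H) ∧
  ConvexOn ℝ Set.univ (V K H) ∧
  (∀ (s : Fin K → ℝ) (k : Fin K), s k ≤ V K H s)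

section Base
variable (hK : 0 < K)
include hK

lemma iSup_eq_max (s : Fin K → ℝ) : ∃ k₀, s k₀ = (⨆ k, s k) ∧ ∀ k, s k ≤ s k₀ := by
  have : Nonempty (Fin K) := ⟨⟨0, hK⟩⟩
  obtain ⟨k₀, hk₀⟩ := Finite.exists_max s
  refine ⟨k₀, le_antisymm (le_ciSup (Set.Finite.bddAbove (Set.finite_range s)) k₀)
    (ciSup_le hk₀), hk₀⟩

lemma good_zero : Good K 0 := by
  have hV : ∀ s : Fin K → ℝ, V K 0 s = ⨆ k, s k := fun s => rfl
  refine ⟨?_, ?_, ?_, ?_, ?_⟩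
  · intro s
    obtain ⟨k₀, hk₀, _⟩ := iSup_eq_max hK s
    rw [hV, Fp]
    show ((∏ k, (X - C (s k))) : Polynomial ℝ).eval _ = 0
    rw [eval_prod]
    exact Finset.prod_eq_zero (Finset.mem_univ k₀) (by rw [← hk₀]; simp)
  · intro s x hx
    rw [hV] at hx
    rw [Fp]
    show 0 < ((∏ k, (X - C (s k))) : Polynomial ℝ).eval x
    rw [eval_prod]
    refine Finset.prod_pos fun k _ => ?_
    obtain ⟨k₀, hk₀, hmax⟩ := iSup_eq_max hK s
    simp only [eval_sub, eval_X, eval_C, sub_pos]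
    exact lt_of_le_of_lt (le_trans (hmax k) (le_of_eq hk₀)) hx
  · intro s t hst
    rw [hV, hV]
    exact ciSup_mono (Set.Finite.bddAbove (Set.finite_range t)) fun k => hst k
  · refine ⟨convex_univ, ?_⟩
    intro x _ y _ a b ha hb hab
    rw [hV, hV, hV]
    have : Nonempty (Fin K) := ⟨⟨0, hK⟩⟩
    refine ciSup_le fun k => ?_
    have h1 : x k ≤ ⨆ j, x j := le_ciSup (Set.Finite.bddAbove (Set.finite_range x)) k
    have h2 : y k ≤ ⨆ j, y j := le_ciSup (Set.Finite.bddAbove (Set.finite_range y)) k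
    have : (a • x + b • y) k = a * x k + b * y k := rfl
    rw [this]
    have := mul_le_mul_of_nonneg_left h1 ha
    have := mul_le_mul_of_nonneg_left h2 hb
    dsimp only [smul_eq_mul]
    linarith
  · intro s k
    rw [hV]
    exact le_ciSup (Set.Finite.bddAbove (Set.finite_range s)) k

end Base

lemma root_uniq (p : Polynomial ℝ) (a b : ℝ) (ha : p.eval a = 0) (ha' : ∀ x, a < x → 0 < p.eval x)
    (hb : p.eval b = 0) (hb' : ∀ x, b < x → 0 < p.eval x) : a = b := by
  rcases lt_trichotomy a b with h | h | h
  · exact absurd hb (ne_of_gt (ha' b h))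
  · exact h
  · exact absurd ha (ne_of_gt (hb' a h))

section Helpers
variable {H : ℕ} (good : Good K H)
include good

lemma V_shift (s : Fin K → ℝ) (c : ℝ) : V K H (fun j => s j + c) = V K H s + c := by
  obtain ⟨ha, hb, _, _, _⟩ := good
  refine root_uniq (Fp H (fun j => s j + c)) _ _ (ha _) (hb _) ?_ ?_
  · rw [Fp_shift_eval, add_sub_cancel_right]; exact ha s
  · intro x hx
    rw [Fp_shift_eval]
    exact hb s _ (by linarith)

lemma V_le_shift {s t : Fin K → ℝ} {c : ℝ} (h : ∀ j, t j ≤ s j + c) :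
    V K H t ≤ V K H s + c := by
  rw [← V_shift good s c]
  exact good.2.2.1 (fun j => h j)

/-- the sup set over q is bounded above -/
lemma qBddAbove (s : Fin K → ℝ) (r : Fin K → ℝ) (hr : r ∈ simplexInt K) :
    BddAbove ((fun q : Fin K → ℝ => V K H (fun k => s k + q k / r k)) '' simplex K) := by
  refine ⟨V K H s + ∑ j, (r j)⁻¹, ?_⟩
  rintro y ⟨q, hq, rfl⟩
  refine V_le_shift good fun j => ?_
  have h1 : q j / r j ≤ (r j)⁻¹ := by
    rw [div_eq_mul_inv]
    nlinarith [hq.1 j, (hr.1 j), inv_pos.mpr (hr.1 j),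
      Finset.single_le_sum (f := fun i => q i) (fun i _ => hq.1 i) (Finset.mem_univ j), hq.2]
  have h2 : (r j)⁻¹ ≤ ∑ i, (r i)⁻¹ :=
    Finset.single_le_sum (f := fun i => (r i)⁻¹) (fun i _ => (inv_pos.mpr (hr.1 i)).le)
      (Finset.mem_univ j)
  linarith
end Helpers

lemma single_mem_simplex (hK : 0 < K) (k : Fin K) : (Pi.single k 1 : Fin K → ℝ) ∈ simplex K := by
  constructor
  · intro j
    rcases eq_or_ne j k with rfl | h
    · simp
    · simp [Pi.single_eq_of_ne h]
  · simp

section Step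
variable (hK : 0 < K) {H : ℕ} (good : Good K H)
include hK good

lemma step_main (s : Fin K → ℝ) :
    (Fp (H+1) s).eval (V K (H+1) s) = 0 ∧
    (∀ x, V K (H+1) s < x → 0 < (Fp (H+1) s).eval x) ∧
    (∀ r ∈ simplexInt K, V K (H+1) s ≤
      sSup ((fun q : Fin K → ℝ => V K H (fun j => s j + q j / r j)) '' simplex K)) ∧
    (∃ r ∈ simplexInt K,
      sSup ((fun q : Fin K → ℝ => V K H (fun j => s j + q j / r j)) '' simplex K) ≤ V K (H+1) s) ∧
    V K H s < V K (H+1) s := by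
  obtain ⟨ga, gb, gmono, gconv, gf⟩ := good
  have : Nonempty (Fin K) := ⟨⟨0, hK⟩⟩
  set v := V K H s with hv
  set p := Fp H s with hp
  have hpd : Fp (H+1) s = p - p.derivative := rfl
  -- Step A
  have hA : ∃ x₀, v < x₀ ∧ (Fp (H+1) s).eval x₀ < 0 := by
    by_contra hcon
    push_neg at hcon
    set h : ℝ → ℝ := fun x => Real.exp (-x) * p.eval x with hh
    have hderiv : ∀ x : ℝ, HasDerivAt h (-(Real.exp (-x) * (Fp (H+1) s).eval x)) x := by
      intro x
      have h1 : HasDerivAt (fun y : ℝ => Real.exp (-y)) (-(Real.exp (-x))) x := by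
        exact ((Real.hasDerivAt_exp (-x)).comp x (hasDerivAt_neg x)).congr_deriv (by ring)
      have h2 := p.hasDerivAt x
      have h3 := h1.mul h2
      refine h3.congr_deriv ?_
      rw [hpd]
      simp only [eval_sub]
      ring
    have hanti : AntitoneOn h (Set.Ici v) := by
      apply antitoneOn_of_deriv_nonpos (convex_Ici v)
      · exact ((Real.continuous_exp.comp continuous_neg).mul p.continuous_aeval).continuousOn
      · exact fun x _ => ((hderiv x).differentiableAt).differentiableWithinAt
      · intro x hx
        rw [interior_Ici] at hx
        rw [(hderiv x).deriv]
        have h4 := hcon x hx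
        have h5 := Real.exp_pos (-x)
        nlinarith
    have h1 : h (v+1) ≤ h v :=
      hanti (Set.self_mem_Ici) (by simp : v + 1 ∈ Set.Ici v) (by linarith)
    have h2 : h v = 0 := by rw [hh]; simp only [hp, hv, ga s]; ring
    have h3 : 0 < p.eval (v+1) := gb s _ (by linarith)
    have h5 := Real.exp_pos (-(v+1))
    rw [h2, hh] at h1
    have h1' : Real.exp (-(v+1)) * p.eval (v+1) ≤ 0 := h1
    nlinarith
  obtain ⟨x₀, hx₀v, hx₀⟩ := hA
  obtain ⟨z, hx₀z, hz0, hzpos⟩ := largest_root (Fp (H+1) s) (Fp_monic _ s).1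
    (by rw [(Fp_monic _ s).2]; omega) x₀ hx₀.le
  have hvz : v < z := lt_of_lt_of_le hx₀v hx₀z
  have hF : 0 < p.eval z := gb s z hvz
  -- Step D
  have hD : ∀ k : Fin K, ∃ u : ℝ, 0 < u ∧
      V K H (fun j => s j + u * (Pi.single k 1 : Fin K → ℝ) j) = z := by
    intro k
    set g : ℝ → ℝ := fun u => V K H (fun j => s j + u * (Pi.single k 1 : Fin K → ℝ) j) with hg
    have hg0 : g 0 = v := by rw [hg]; simp; rfl
    have hgmono : Monotone g := by
      intro a b hab
      refine gmono fun j => ?_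
      rcases eq_or_ne j k with rfl | hne
      · simp only [Pi.single_eq_same, mul_one]; linarith
      · simp [Pi.single_eq_of_ne hne]
    have hglip : ∀ a b : ℝ, a ≤ b → g b ≤ g a + (b - a) := by
      intro a b hab
      refine V_le_shift ⟨ga, gb, gmono, gconv, gf⟩ fun j => ?_
      rcases eq_or_ne j k with rfl | hne
      · simp only [Pi.single_eq_same, mul_one]; linarith
      · simp [Pi.single_eq_of_ne hne]; linarith
    have hgcont : Continuous g := by
      refine Metric.continuous_iff.mpr fun a ε hε => ⟨ε, hε, fun b hab => ?_⟩
      rw [Real.dist_eq] at *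
      rcases le_total a b with hle | hle
      · have := hglip a b hle
        have := hgmono hle
        rw [abs_lt] at hab ⊢
        constructor <;> linarith [abs_nonneg (b-a)]
      · have := hglip b a hle
        have := hgmono hle
        rw [abs_lt] at hab ⊢
        constructor <;> linarith
    set U : ℝ := max 0 (z - s k + 1) with hU
    have hgU : z ≤ g U := by
      have h1 := gf (fun j => s j + U * (Pi.single k 1 : Fin K → ℝ) j) k
      have h2 : g U = V K H (fun j => s j + U * (Pi.single k 1 : Fin K → ℝ) j) := rfl
      rw [← h2, Pi.single_eq_same, mul_one] at h1
      have : z - s k + 1 ≤ U := le_max_right _ _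
      linarith
    have hmem : z ∈ Set.Icc (g 0) (g U) := ⟨by rw [hg0]; exact hvz.le, hgU⟩
    obtain ⟨u, hu, hu2⟩ := intermediate_value_Icc (le_max_left 0 (z - s k + 1))
      hgcont.continuousOn hmem
    refine ⟨u, ?_, hu2⟩
    rcases lt_or_eq_of_le hu.1 with h | h
    · exact h
    · exfalso
      rw [← h, hg0] at hu2
      exact absurd hu2 (ne_of_lt hvz)
  choose u hu0 huz using hD
  -- eval of Ak at z
  have hAk : ∀ k, (Ak H k s).eval z * u k = p.eval z := by
    intro k
    have h1 : (Fp H (fun j => s j + u k * (Pi.single k 1 : Fin K → ℝ) j)).eval z = 0 := by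
      have := ga (fun j => s j + u k * (Pi.single k 1 : Fin K → ℝ) j)
      rwa [huz k] at this
    rw [Fp_update] at h1
    simp only [eval_sub, eval_mul, eval_C] at h1
    rw [← hp] at h1
    linarith
  have hsum_eval : ∑ k, (Ak H k s).eval z = p.eval z := by
    have h2 : ∑ k, (Ak H k s).eval z = (p.derivative).eval z := by
      rw [← eval_finset_sum]
      rw [sum_Ak]
    have h3 : (p.derivative).eval z = p.eval z := by
      have h4 := hz0
      rw [hpd] at h4
      simp only [eval_sub] at h4
      linarith
    rw [h2, h3]
  have hsum : ∑ k, (u k)⁻¹ = 1 := by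
    have h1 : ∀ k, (u k)⁻¹ = (Ak H k s).eval z / p.eval z := by
      intro k
      rw [eq_div_iff (ne_of_gt hF), ← hAk k]
      rw [inv_mul_eq_div, mul_div_assoc, div_self (ne_of_gt (hu0 k)), mul_one]
    rw [Finset.sum_congr rfl fun k _ => h1 k, ← Finset.sum_div, hsum_eval,
      div_self (ne_of_gt hF)]
  set r : Fin K → ℝ := fun k => (u k)⁻¹ with hr
  have hrS : r ∈ simplexInt K := ⟨fun k => inv_pos.mpr (hu0 k), hsum⟩
  -- upper bound at r
  have hupper : ∀ q ∈ simplex K, V K H (fun j => s j + q j / r j) ≤ z := by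
    intro q hq
    have hrep : (fun j => s j + q j / r j)
        = ∑ k, q k • (fun j => s j + u k * (Pi.single k 1 : Fin K → ℝ) j) := by
      funext j
      rw [Finset.sum_apply]
      simp only [Pi.smul_apply, smul_eq_mul]
      have hterm : ∀ k, q k * (s j + u k * (Pi.single k 1 : Fin K → ℝ) j)
          = q k * s j + q k * u k * (Pi.single k 1 : Fin K → ℝ) j := by intro k; ring
      rw [Finset.sum_congr rfl fun k _ => hterm k, Finset.sum_add_distrib, ← Finset.sum_mul,
        hq.2, one_mul]
      have hsingle : ∑ k, q k * u k * (Pi.single k 1 : Fin K → ℝ) j = q j * u j := by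
        rw [Finset.sum_eq_single j]
        · simp
        · intro b _ hbj
          simp [Pi.single_eq_of_ne (Ne.symm hbj)]
        · intro hj; exact absurd (Finset.mem_univ j) hj
      rw [hsingle, hr]
      simp only []
      rw [division_def, inv_inv]
    rw [hrep]
    have hjen := gconv.map_sum_le (t := Finset.univ) (w := q)
      (p := fun k => (fun j => s j + u k * (Pi.single k 1 : Fin K → ℝ) j))
      (fun i _ => hq.1 i) hq.2 (fun i _ => Set.mem_univ _)
    refine le_trans hjen ?_
    have : ∀ k, q k • V K H (fun j => s j + u k * (Pi.single k 1 : Fin K → ℝ) j) = q k * z := by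
      intro k; rw [huz k, smul_eq_mul]
    rw [Finset.sum_congr rfl fun k _ => this k, ← Finset.sum_mul, hq.2, one_mul]
  -- lower bound for all r'
  have hlower : ∀ r' ∈ simplexInt K, z ≤
      sSup ((fun q : Fin K → ℝ => V K H (fun j => s j + q j / r' j)) '' simplex K) := by
    intro r' hr'
    have hex : ∃ k : Fin K, z ≤ V K H (fun j => s j + (Pi.single k 1 : Fin K → ℝ) j / r' j) := by
      by_contra hcon
      push_neg at hcon
      have hkey : ∀ k, (Ak H k s).eval z < r' k * p.eval z := by
        intro k
        have heq : (fun j => s j + (Pi.single k 1 : Fin K → ℝ) j / r' j)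
            = (fun j => s j + (r' k)⁻¹ * (Pi.single k 1 : Fin K → ℝ) j) := by
          funext j
          rcases eq_or_ne j k with rfl | hne
          · rw [Pi.single_eq_same, div_eq_mul_inv, one_mul, mul_one]
          · simp [Pi.single_eq_of_ne hne]
        have hlt := hcon k
        rw [heq] at hlt
        have h1 := gb _ z hlt
        rw [Fp_update] at h1
        simp only [eval_sub, eval_mul, eval_C] at h1
        rw [← hp] at h1
        have h2 := hr'.1 k
        have h3 : (r' k)⁻¹ * (Ak H k s).eval z < p.eval z := by linarith
        calc (Ak H k s).eval z = r' k * ((r' k)⁻¹ * (Ak H k s).eval z) := by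
              field_simp
          _ < r' k * p.eval z := by
              exact mul_lt_mul_of_pos_left h3 h2
      have hlt : ∑ k, (Ak H k s).eval z < ∑ k, r' k * p.eval z :=
        Finset.sum_lt_sum_of_nonempty Finset.univ_nonempty fun k _ => hkey k
      rw [hsum_eval, ← Finset.sum_mul, hr'.2, one_mul] at hlt
      exact lt_irrefl _ hlt
    obtain ⟨k, hk⟩ := hex
    refine le_trans hk (le_csSup (qBddAbove ⟨ga, gb, gmono, gconv, gf⟩ s r' hr') ?_)
    exact ⟨Pi.single k 1, single_mem_simplex hK k, rfl⟩
  -- value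
  have hVu : V K (H+1) s = sInf ((fun r' : Fin K → ℝ =>
      sSup ((fun q : Fin K → ℝ => V K H (fun j => s j + q j / r' j)) '' simplex K))
      '' simplexInt K) := rfl
  have hbddB : BddBelow ((fun r' : Fin K → ℝ =>
      sSup ((fun q : Fin K → ℝ => V K H (fun j => s j + q j / r' j)) '' simplex K))
      '' simplexInt K) := by
    refine ⟨z, ?_⟩
    rintro y ⟨r', hr', rfl⟩
    exact hlower r' hr'
  have hqne : ∀ r' : Fin K → ℝ, ((fun q : Fin K → ℝ =>
      V K H (fun j => s j + q j / r' j)) '' simplex K).Nonempty :=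
    fun r' => ⟨_, ⟨Pi.single ⟨0, hK⟩ 1, single_mem_simplex hK _, rfl⟩⟩
  have hVal : V K (H+1) s = z := by
    rw [hVu]
    refine le_antisymm ?_ ?_
    · refine le_trans (csInf_le hbddB ⟨r, hrS, rfl⟩) ?_
      refine csSup_le (hqne r) ?_
      rintro y ⟨q, hq, rfl⟩
      exact hupper q hq
    · refine le_csInf ⟨_, ⟨r, hrS, rfl⟩⟩ ?_
      rintro y ⟨r', hr', rfl⟩
      exact hlower r' hr'
  rw [hVal]
  exact ⟨hz0, fun x hx => hzpos x hx, hlower, ⟨r, hrS, by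
    refine csSup_le (hqne r) ?_
    rintro y ⟨q, hq, rfl⟩
    exact hupper q hq⟩, hvz⟩

end Step

section Step2
variable (hK : 0 < K) {H : ℕ} (good : Good K H)
include hK good

lemma step_mono : Monotone (V K (H+1)) := by
  intro s t hst
  obtain ⟨_, _, hlows, _, _⟩ := step_main hK good s
  obtain ⟨_, _, _, ⟨rt, hrt, hsupt⟩, _⟩ := step_main hK good t
  have hbddBs : BddBelow ((fun r' : Fin K → ℝ =>
      sSup ((fun q : Fin K → ℝ => V K H (fun j => s j + q j / r' j)) '' simplex K))
      '' simplexInt K) := by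
    refine ⟨V K (H+1) s, ?_⟩
    rintro y ⟨r', hr', rfl⟩
    exact hlows r' hr'
  have hqne : ∀ (w : Fin K → ℝ) (r' : Fin K → ℝ), ((fun q : Fin K → ℝ =>
      V K H (fun j => w j + q j / r' j)) '' simplex K).Nonempty :=
    fun w r' => ⟨_, ⟨Pi.single ⟨0, hK⟩ 1, single_mem_simplex hK _, rfl⟩⟩
  have hVt : V K (H+1) t = sInf ((fun r' : Fin K → ℝ =>
      sSup ((fun q : Fin K → ℝ => V K H (fun j => t j + q j / r' j)) '' simplex K))
      '' simplexInt K) := rfl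
  have hVs : V K (H+1) s = sInf ((fun r' : Fin K → ℝ =>
      sSup ((fun q : Fin K → ℝ => V K H (fun j => s j + q j / r' j)) '' simplex K))
      '' simplexInt K) := rfl
  rw [hVt]
  refine le_csInf ⟨_, ⟨rt, hrt, rfl⟩⟩ ?_
  rintro y ⟨r', hr', rfl⟩
  have h1 : V K (H+1) s ≤ sSup ((fun q : Fin K → ℝ =>
      V K H (fun j => s j + q j / r' j)) '' simplex K) := by
    rw [hVs]
    exact csInf_le hbddBs ⟨r', hr', rfl⟩
  refine le_trans h1 (csSup_le (hqne s r') ?_)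
  rintro w ⟨q, hq, rfl⟩
  refine le_trans (good.2.2.1 fun j => by dsimp; linarith [hst j] :
    V K H (fun j => s j + q j / r' j) ≤ V K H (fun j => t j + q j / r' j)) ?_
  exact le_csSup (qBddAbove good t r' hr') ⟨q, hq, rfl⟩

omit hK good in
lemma amhm {q a b θ : ℝ} (ha : 0 < a) (hb : 0 < b) (hq : 0 ≤ q) (hθ : 0 ≤ θ) (hθ1 : θ ≤ 1)
    (hab : 0 < θ*a + (1-θ)*b) :
    q / (θ*a + (1-θ)*b) ≤ θ*(q/a) + (1-θ)*(q/b) := by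
  rw [← sub_nonneg]
  have key : θ*(q/a) + (1-θ)*(q/b) - q/(θ*a + (1-θ)*b)
      = θ*(1-θ)*q*(a-b)^2 / (a*b*(θ*a + (1-θ)*b)) := by
    field_simp
    ring
  rw [key]
  apply div_nonneg
  · have := mul_nonneg (mul_nonneg (mul_nonneg hθ (by linarith : (0:ℝ) ≤ 1-θ)) hq)
      (sq_nonneg (a-b))
    linarith [this]
  · positivity

lemma step_convex : ConvexOn ℝ Set.univ (V K (H+1)) := by
  refine ⟨convex_univ, ?_⟩
  intro s₁ _ s₂ _ θ β hθ hβ hθβ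
  have hβθ : β = 1 - θ := by linarith
  subst hβθ
  obtain ⟨_, _, hlow, _, _⟩ := step_main hK good (θ • s₁ + (1-θ) • s₂)
  obtain ⟨_, _, _, ⟨r₁, hr₁, hsup₁⟩, _⟩ := step_main hK good s₁
  obtain ⟨_, _, _, ⟨r₂, hr₂, hsup₂⟩, _⟩ := step_main hK good s₂
  set sb := θ • s₁ + (1-θ) • s₂ with hsb
  set rb : Fin K → ℝ := fun k => θ * r₁ k + (1-θ) * r₂ k with hrb
  have hrbS : rb ∈ simplexInt K := by
    constructor
    · intro k
      have h1 := hr₁.1 k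
      have h2 := hr₂.1 k
      have h3 := min_le_left (r₁ k) (r₂ k)
      have h4 := min_le_right (r₁ k) (r₂ k)
      have h5 : 0 < min (r₁ k) (r₂ k) := lt_min h1 h2
      show 0 < θ * r₁ k + (1-θ) * r₂ k
      nlinarith [mul_le_mul_of_nonneg_left h3 hθ, mul_le_mul_of_nonneg_left h4
        (by linarith : (0:ℝ) ≤ 1-θ)]
    · rw [hrb]
      rw [Finset.sum_add_distrib, ← Finset.mul_sum, ← Finset.mul_sum, hr₁.2, hr₂.2]
      ring
  have hqne : ∀ (w : Fin K → ℝ) (r' : Fin K → ℝ), ((fun q : Fin K → ℝ =>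
      V K H (fun j => w j + q j / r' j)) '' simplex K).Nonempty :=
    fun w r' => ⟨_, ⟨Pi.single ⟨0, hK⟩ 1, single_mem_simplex hK _, rfl⟩⟩
  have hbddB : BddBelow ((fun r' : Fin K → ℝ =>
      sSup ((fun q : Fin K → ℝ => V K H (fun j => sb j + q j / r' j)) '' simplex K))
      '' simplexInt K) := by
    refine ⟨V K (H+1) sb, ?_⟩
    rintro y ⟨r', hr', rfl⟩
    exact hlow r' hr'
  have hVsb : V K (H+1) sb = sInf ((fun r' : Fin K → ℝ =>
      sSup ((fun q : Fin K → ℝ => V K H (fun j => sb j + q j / r' j)) '' simplex K))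
      '' simplexInt K) := rfl
  have h1 : V K (H+1) sb ≤ sSup ((fun q : Fin K → ℝ =>
      V K H (fun j => sb j + q j / rb j)) '' simplex K) := by
    rw [hVsb]
    exact csInf_le hbddB ⟨rb, hrbS, rfl⟩
  refine le_trans h1 ?_
  have h2 : sSup ((fun q : Fin K → ℝ => V K H (fun j => sb j + q j / rb j)) '' simplex K)
      ≤ θ * V K (H+1) s₁ + (1-θ) * V K (H+1) s₂ := by
    refine csSup_le (hqne sb rb) ?_
    rintro y ⟨q, hq, rfl⟩
    have hptwise : ∀ j, sb j + q j / rb j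
        ≤ θ * (s₁ j + q j / r₁ j) + (1-θ) * (s₂ j + q j / r₂ j) := by
      intro j
      have := amhm (hr₁.1 j) (hr₂.1 j) (hq.1 j) hθ (by linarith) (hrbS.1 j)
      have hsbj : sb j = θ * s₁ j + (1-θ) * s₂ j := rfl
      rw [hsbj]
      have hrbj : rb j = θ * r₁ j + (1-θ) * r₂ j := rfl
      rw [hrbj]
      linarith
    have hcvx : V K H (fun j => sb j + q j / rb j)
        ≤ θ * V K H (fun j => s₁ j + q j / r₁ j) + (1-θ) * V K H (fun j => s₂ j + q j / r₂ j) := by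
      have hmono := good.2.2.1 (fun j => hptwise j :
        (fun j => sb j + q j / rb j) ≤ fun j => θ * (s₁ j + q j / r₁ j) + (1-θ) * (s₂ j + q j / r₂ j))
      refine le_trans hmono ?_
      have hj := good.2.2.2.1.2 (Set.mem_univ (fun j => s₁ j + q j / r₁ j))
        (Set.mem_univ (fun j => s₂ j + q j / r₂ j)) hθ (by linarith : (0:ℝ) ≤ 1-θ)
        (by ring : θ + (1-θ) = (1:ℝ))
      exact le_of_eq_of_le (by rfl) hj
    refine le_trans hcvx ?_
    have hm₁ : V K H (fun j => s₁ j + q j / r₁ j) ≤ V K (H+1) s₁ :=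
      le_trans (le_csSup (qBddAbove good s₁ r₁ hr₁) ⟨q, hq, rfl⟩) hsup₁
    have hm₂ : V K H (fun j => s₂ j + q j / r₂ j) ≤ V K (H+1) s₂ :=
      le_trans (le_csSup (qBddAbove good s₂ r₂ hr₂) ⟨q, hq, rfl⟩) hsup₂
    nlinarith [mul_le_mul_of_nonneg_left hm₁ hθ,
      mul_le_mul_of_nonneg_left hm₂ (by linarith : (0:ℝ) ≤ 1-θ)]
  exact h2

lemma good_succ : Good K (H+1) := by
  refine ⟨?_, ?_, step_mono hK good, step_convex hK good, ?_⟩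
  · intro s; exact (step_main hK good s).1
  · intro s x hx; exact (step_main hK good s).2.1 x hx
  · intro s k
    have h5 := (step_main hK good s).2.2.2.2
    have h6 := good.2.2.2.2 s k
    linarith

end Step2

/-- The optimal bookmaking loss `V K T 0` is the largest real root of `P_{T,K}`. -/
theorem optimal_loss_largest_root (K T : ℕ) (hK : 1 ≤ K) (hT : 1 ≤ T) :
    P T K (V K T 0) = 0 ∧ ∀ x : ℝ, P T K x = 0 → x ≤ V K T 0 := by
  have hK0 : 0 < K := hK
  have good : Good K T := by
    clear hT
    induction T with
    | zero => exact good_zero hK0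
    | succ T ih => exact good_succ hK0 ih
  have hPeq : ∀ x : ℝ, P T K x = (Fp T (0 : Fin K → ℝ)).eval x := by
    intro x
    rw [Fp_zero_eq, eval_finset_sum]
    unfold P
    refine Finset.sum_congr rfl fun m _ => ?_
    simp [eval_mul, eval_pow]
  constructor
  · rw [hPeq]
    exact good.1 0
  · intro x hx
    by_contra h
    push_neg at h
    have hpos := good.2.1 0 x h
    rw [hPeq x] at hx
    linarith
end
end

section
/- For every integer T ≥ 1, in the case K = 2 the optimal bookmaking loss satisfies V T 0 = T + √T. -/
open scoped BigOperators

noncomputable section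

namespace BookmakingAux

lemma sqrt_le_of_sq_le {x R : ℝ} (hR : 0 ≤ R) (h : x ≤ R ^ 2) : Real.sqrt x ≤ R := by
  calc Real.sqrt x ≤ Real.sqrt (R ^ 2) := Real.sqrt_le_sqrt h
  _ = R := Real.sqrt_sq hR

lemma sqrt_lip_abs (h u v : ℝ) (hh : 0 ≤ h) :
    Real.sqrt (h + v ^ 2) ≤ Real.sqrt (h + u ^ 2) + |v - u| := by
  set A := Real.sqrt (h + u ^ 2) with hA
  have hA0 : 0 ≤ A := Real.sqrt_nonneg _
  have hA2 : A ^ 2 = h + u ^ 2 := Real.sq_sqrt (add_nonneg hh (sq_nonneg _))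
  have hAu : |u| ≤ A := by
    rw [hA, ← Real.sqrt_sq_eq_abs]
    exact Real.sqrt_le_sqrt (by linarith)
  have h2 : u * (v - u) ≤ |u| * |v - u| := by
    calc u * (v - u) ≤ |u * (v - u)| := le_abs_self _
    _ = |u| * |v - u| := abs_mul _ _
  have h3 : |u| * |v - u| ≤ A * |v - u| := mul_le_mul_of_nonneg_right hAu (abs_nonneg _)
  apply sqrt_le_of_sq_le (by positivity)
  have hsq : |v - u| ^ 2 = (v - u) ^ 2 := sq_abs _
  nlinarith [h2, h3]

lemma sqrt_convex (h x y t : ℝ) (hh : 0 ≤ h) (ht0 : 0 ≤ t) (ht1 : t ≤ 1) :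
    Real.sqrt (h + (t * x + (1 - t) * y) ^ 2)
      ≤ t * Real.sqrt (h + x ^ 2) + (1 - t) * Real.sqrt (h + y ^ 2) := by
  set A := Real.sqrt (h + x ^ 2) with hA
  set B := Real.sqrt (h + y ^ 2) with hB
  have hA0 : 0 ≤ A := Real.sqrt_nonneg _
  have hB0 : 0 ≤ B := Real.sqrt_nonneg _
  have hA2 : A ^ 2 = h + x ^ 2 := Real.sq_sqrt (add_nonneg hh (sq_nonneg _))
  have hB2 : B ^ 2 = h + y ^ 2 := Real.sq_sqrt (add_nonneg hh (sq_nonneg _))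
  have hABsq : (A * B) ^ 2 = (h + x ^ 2) * (h + y ^ 2) := by rw [mul_pow, hA2, hB2]
  have hAB : h + x * y ≤ A * B := by
    nlinarith [mul_nonneg hA0 hB0, mul_nonneg hh (sq_nonneg (x - y)), sq_nonneg (A * B - (h + x * y)), sq_nonneg (A * B + (h + x * y))]
  apply sqrt_le_of_sq_le (add_nonneg (mul_nonneg ht0 hA0) (mul_nonneg (sub_nonneg.mpr ht1) hB0))
  nlinarith [hAB, mul_nonneg ht0 (sub_nonneg.mpr ht1), hA2, hB2]

noncomputable def Phi (H : ℕ) (a b : ℝ) : ℝ :=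
  (a + b) / 2 + H + Real.sqrt (H + ((a - b) / 2) ^ 2)

lemma Phi_mono (H : ℕ) {a b a' b' : ℝ} (ha : a ≤ a') (hb : b ≤ b') :
    Phi H a b ≤ Phi H a' b' := by
  unfold Phi
  have hl := sqrt_lip_abs (H : ℝ) ((a' - b') / 2) ((a - b) / 2) (Nat.cast_nonneg H)
  have habs : |(a - b) / 2 - (a' - b') / 2| ≤ ((a' - a) + (b' - b)) / 2 := by
    rw [abs_le]; constructor <;> linarith
  linarith

lemma mem_simplex2 {q : Fin 2 → ℝ} :
    q ∈ simplex 2 ↔ (0 ≤ q 0 ∧ 0 ≤ q 1 ∧ q 0 + q 1 = 1) := by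
  constructor
  · rintro ⟨h1, h2⟩
    exact ⟨h1 0, h1 1, by simpa [Fin.sum_univ_two] using h2⟩
  · rintro ⟨h0, h1, hs⟩
    refine ⟨fun k => ?_, by simp [Fin.sum_univ_two, hs]⟩
    fin_cases k <;> assumption

lemma mem_simplexInt2 {r : Fin 2 → ℝ} :
    r ∈ simplexInt 2 ↔ (0 < r 0 ∧ 0 < r 1 ∧ r 0 + r 1 = 1) := by
  constructor
  · rintro ⟨h1, h2⟩
    exact ⟨h1 0, h1 1, by simpa [Fin.sum_univ_two] using h2⟩
  · rintro ⟨h0, h1, hs⟩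
    refine ⟨fun k => ?_, by simp [Fin.sum_univ_two, hs]⟩
    fin_cases k <;> assumption

lemma V_zero (s : Fin 2 → ℝ) : V 2 0 s = Phi 0 (s 0) (s 1) := by
  have h0 : V 2 0 s = ⨆ k, s k := rfl
  have h1 : (⨆ k : Fin 2, s k) = max (s 0) (s 1) := by
    apply le_antisymm
    · apply ciSup_le; intro k
      fin_cases k
      · exact le_max_left _ _
      · exact le_max_right _ _
    · apply max_le <;> exact le_ciSup (Set.Finite.bddAbove (Set.finite_range s)) _
  rw [h0, h1]
  unfold Phi
  rw [Nat.cast_zero, zero_add, Real.sqrt_sq_eq_abs]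
  rcases le_total (s 0) (s 1) with h | h
  · rw [max_eq_right h, abs_of_nonpos (by linarith)]; ring
  · rw [max_eq_left h, abs_of_nonneg (by linarith)]; ring

lemma key (h d y : ℝ) (hh : 0 ≤ h) (hy : y = 1 + Real.sqrt (h + 1 + d ^ 2)) :
    1 ≤ y + d ∧ Real.sqrt (h + (d + y / (y + d)) ^ 2) = y - y / (y + d) := by
  have hS0 : 0 ≤ Real.sqrt (h + 1 + d ^ 2) := Real.sqrt_nonneg _
  have hS2 : (Real.sqrt (h + 1 + d ^ 2)) ^ 2 = h + 1 + d ^ 2 :=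
    Real.sq_sqrt (by nlinarith [sq_nonneg d])
  have hSd : |d| ≤ Real.sqrt (h + 1 + d ^ 2) := by
    rw [← Real.sqrt_sq_eq_abs]
    exact Real.sqrt_le_sqrt (by linarith)
  have hd1 : -d ≤ Real.sqrt (h + 1 + d ^ 2) := le_trans (neg_le_abs d) hSd
  have hd2 : d ≤ Real.sqrt (h + 1 + d ^ 2) := le_trans (le_abs_self d) hSd
  have hyd : 1 ≤ y + d := by rw [hy]; linarith
  have hy1 : 1 ≤ y := by rw [hy]; linarith
  have hydne : y + d ≠ 0 := by linarith
  have hy2 : y ^ 2 - 2 * y = h + d ^ 2 := by rw [hy]; nlinarith [hS2]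
  refine ⟨hyd, ?_⟩
  have hkey : h + (d + y / (y + d)) ^ 2 = (y - y / (y + d)) ^ 2 := by
    field_simp
    ring_nf
    nlinarith [hy2, sq_nonneg (y + d)]
  rw [hkey, Real.sqrt_sq]
  have : y / (y + d) ≤ y := by
    rw [div_le_iff₀ (by linarith)]
    nlinarith
  linarith

lemma branch_mono (h d : ℝ) (hh : 0 ≤ h) {α β : ℝ} (hab : α ≤ β) :
    α / 2 + Real.sqrt (h + (d + α / 2) ^ 2) ≤ β / 2 + Real.sqrt (h + (d + β / 2) ^ 2) := by
  have hl := sqrt_lip_abs h (d + β / 2) (d + α / 2) hh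
  have habs : |d + α / 2 - (d + β / 2)| = (β - α) / 2 := by
    rw [abs_of_nonpos (by linarith)]; ring
  rw [habs] at hl
  linarith

set_option maxHeartbeats 1000000 in
lemma V_succ (H : ℕ) (ih : ∀ s : Fin 2 → ℝ, V 2 H s = Phi H (s 0) (s 1)) (s : Fin 2 → ℝ) :
    V 2 (H + 1) s = Phi (H + 1) (s 0) (s 1) := by
  have hHc : (0 : ℝ) ≤ (H : ℝ) := Nat.cast_nonneg H
  set a := s 0 with ha
  set b := s 1 with hb
  set d := (a - b) / 2 with hd
  set y := 1 + Real.sqrt ((H : ℝ) + 1 + d ^ 2) with hy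
  have hS0 : 0 ≤ Real.sqrt ((H : ℝ) + 1 + d ^ 2) := Real.sqrt_nonneg _
  have hy1 : 1 ≤ y := by rw [hy]; linarith
  have hy0 : 0 < y := by linarith
  obtain ⟨hyd, hkey⟩ := key (H : ℝ) d y hHc hy
  obtain ⟨hyd'0, hkeyneg⟩ := key (H : ℝ) (-d) y hHc (by rw [neg_pow]; norm_num; exact hy)
  rw [← sub_eq_add_neg] at hyd'0 hkeyneg
  have hydpos : 0 < y + d := by linarith
  have hydpos' : 0 < y - d := by linarith
  have hkey' : Real.sqrt ((H : ℝ) + (d - y / (y - d)) ^ 2) = y - y / (y - d) := by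
    rw [show (d - y / (y - d)) ^ 2 = (-d + y / (y - d)) ^ 2 by ring]
    exact hkeyneg
  -- value of the target
  have hPhiT : Phi (H + 1) a b = (a + b) / 2 + (H : ℝ) + y := by
    unfold Phi
    push_cast
    rw [← hd]
    rw [show Real.sqrt ((H : ℝ) + 1 + d ^ 2) = y - 1 by rw [hy]; ring]
    ring
  have hVdef : V 2 (H + 1) s = sInf ((fun r : Fin 2 → ℝ =>
      sSup ((fun q : Fin 2 → ℝ => V 2 H (fun k => s k + q k / r k)) '' simplex 2))
      '' simplexInt 2) := rfl
  have hfun : (fun r : Fin 2 → ℝ =>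
      sSup ((fun q : Fin 2 → ℝ => V 2 H (fun k => s k + q k / r k)) '' simplex 2))
      = (fun r : Fin 2 → ℝ =>
      sSup ((fun q : Fin 2 → ℝ => Phi H (a + q 0 / r 0) (b + q 1 / r 1)) '' simplex 2)) := by
    funext r
    congr 1
    apply Set.image_congr
    intro q _
    rw [ih]
  rw [hVdef, hfun, hPhiT]
  -- vertices
  have he0 : (![(1 : ℝ), 0]) ∈ simplex 2 := mem_simplex2.mpr (by norm_num)
  have he1 : (![(0 : ℝ), 1]) ∈ simplex 2 := mem_simplex2.mpr (by norm_num)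
  -- lower bound for every r
  have hlow : ∀ r : Fin 2 → ℝ, r ∈ simplexInt 2 →
      (a + b) / 2 + (H : ℝ) + y ≤
      sSup ((fun q : Fin 2 → ℝ => Phi H (a + q 0 / r 0) (b + q 1 / r 1)) '' simplex 2) := by
    intro r hr
    obtain ⟨hr0, hr1, hrs⟩ := mem_simplexInt2.mp hr
    have hbdd : BddAbove ((fun q : Fin 2 → ℝ => Phi H (a + q 0 / r 0) (b + q 1 / r 1)) '' simplex 2) := by
      refine ⟨Phi H (a + 1 / r 0) (b + 1 / r 1), ?_⟩
      rintro x ⟨q, hq, rfl⟩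
      obtain ⟨hq0, hq1, hqs⟩ := mem_simplex2.mp hq
      exact Phi_mono H
        (by have := (div_le_div_iff_of_pos_right hr0).mpr (show q 0 ≤ 1 by linarith); linarith)
        (by have := (div_le_div_iff_of_pos_right hr1).mpr (show q 1 ≤ 1 by linarith); linarith)
    have hsum1 : (y + d) / (2 * y) + (y - d) / (2 * y) = 1 := by field_simp; ring
    by_cases hc : r 0 ≤ (y + d) / (2 * y)
    · -- play vertex 0
      have hα : 2 * y / (y + d) ≤ 1 / r 0 := by
        rw [div_le_div_iff₀ (by positivity) hr0]
        have h2 := (le_div_iff₀ (by positivity : (0 : ℝ) < 2 * y)).mp hc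
        nlinarith
      have hmem : Phi H (a + 1 / r 0) (b + 0 / r 1) ∈
          ((fun q : Fin 2 → ℝ => Phi H (a + q 0 / r 0) (b + q 1 / r 1)) '' simplex 2) :=
        ⟨![1, 0], he0, rfl⟩
      have hbm := branch_mono (H : ℝ) d hHc hα
      rw [show 2 * y / (y + d) / 2 = y / (y + d) by ring] at hbm
      rw [hkey] at hbm
      have hPhival : Phi H (a + 1 / r 0) (b + 0 / r 1) =
          (a + b) / 2 + (H : ℝ) + (1 / r 0 / 2 + Real.sqrt ((H : ℝ) + (d + 1 / r 0 / 2) ^ 2)) := by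
        unfold Phi
        rw [zero_div, add_zero, show (a + 1 / r 0 - b) / 2 = d + 1 / r 0 / 2 by rw [hd]; ring]
        ring
      refine le_trans ?_ (le_csSup hbdd hmem)
      rw [hPhival]
      linarith
    · -- play vertex 1
      push_neg at hc
      have hc' : r 1 ≤ (y - d) / (2 * y) := by linarith
      have hβ : 2 * y / (y - d) ≤ 1 / r 1 := by
        rw [div_le_div_iff₀ (by positivity) hr1]
        have h2 := (le_div_iff₀ (by positivity : (0 : ℝ) < 2 * y)).mp hc'
        nlinarith
      have hmem : Phi H (a + 0 / r 0) (b + 1 / r 1) ∈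
          ((fun q : Fin 2 → ℝ => Phi H (a + q 0 / r 0) (b + q 1 / r 1)) '' simplex 2) :=
        ⟨![0, 1], he1, rfl⟩
      have hbm := branch_mono (H : ℝ) (-d) hHc hβ
      rw [show 2 * y / (y - d) / 2 = y / (y - d) by ring] at hbm
      rw [hkeyneg] at hbm
      have hPhival : Phi H (a + 0 / r 0) (b + 1 / r 1) =
          (a + b) / 2 + (H : ℝ) + (1 / r 1 / 2 + Real.sqrt ((H : ℝ) + (-d + 1 / r 1 / 2) ^ 2)) := by
        unfold Phi
        rw [zero_div, add_zero, show (a - (b + 1 / r 1)) / 2 = -(-d + 1 / r 1 / 2) by rw [hd]; ring,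
          neg_pow]
        norm_num
        ring
      refine le_trans ?_ (le_csSup hbdd hmem)
      rw [hPhival]
      linarith
  -- the optimal r*
  have hrstar : (![(y + d) / (2 * y), (y - d) / (2 * y)]) ∈ simplexInt 2 := by
    refine mem_simplexInt2.mpr ⟨?_, ?_, ?_⟩
    · show (0 : ℝ) < (y + d) / (2 * y); positivity
    · show (0 : ℝ) < (y - d) / (2 * y); positivity
    · show (y + d) / (2 * y) + (y - d) / (2 * y) = 1; field_simp; ring
  have hup : sSup ((fun q : Fin 2 → ℝ =>
      Phi H (a + q 0 / ((y + d) / (2 * y))) (b + q 1 / ((y - d) / (2 * y)))) '' simplex 2)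
      ≤ (a + b) / 2 + (H : ℝ) + y := by
    apply csSup_le
    · exact Set.Nonempty.image _ ⟨![1, 0], he0⟩
    · rintro x ⟨q, hq, rfl⟩
      obtain ⟨hq0, hq1n, hqs⟩ := mem_simplex2.mp hq
      have hq1 : q 1 = 1 - q 0 := by linarith
      have ht1 : q 0 ≤ 1 := by linarith
      have hstep := sqrt_convex (H : ℝ) (d + y / (y + d)) (d - y / (y - d)) (q 0) hHc hq0 ht1
      rw [hkey, hkey'] at hstep
      have hPhival : Phi H (a + q 0 / ((y + d) / (2 * y))) (b + (1 - q 0) / ((y - d) / (2 * y)))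
          = (a + b) / 2 + (H : ℝ) + (q 0 * (y / (y + d)) + (1 - q 0) * (y / (y - d)))
            + Real.sqrt ((H : ℝ) + (q 0 * (d + y / (y + d)) + (1 - q 0) * (d - y / (y - d))) ^ 2) := by
        unfold Phi
        rw [show (a + q 0 / ((y + d) / (2 * y)) - (b + (1 - q 0) / ((y - d) / (2 * y)))) / 2
            = q 0 * (d + y / (y + d)) + (1 - q 0) * (d - y / (y - d)) by
          rw [hd]; field_simp; ring]
        rw [show (a + q 0 / ((y + d) / (2 * y)) + (b + (1 - q 0) / ((y - d) / (2 * y)))) / 2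
            = (a + b) / 2 + (q 0 * (y / (y + d)) + (1 - q 0) * (y / (y - d))) by
          field_simp; ring]
        ring
      show Phi H (a + q 0 / ((y + d) / (2 * y))) (b + q 1 / ((y - d) / (2 * y)))
          ≤ (a + b) / 2 + (H : ℝ) + y
      rw [hq1, hPhival]
      have hcomb : q 0 * (y / (y + d)) + (1 - q 0) * (y / (y - d))
          + (q 0 * (y - y / (y + d)) + (1 - q 0) * (y - y / (y - d))) = y := by ring
      linarith
  -- assemble
  have hlb : ∀ x ∈ ((fun r : Fin 2 → ℝ =>
      sSup ((fun q : Fin 2 → ℝ => Phi H (a + q 0 / r 0) (b + q 1 / r 1)) '' simplex 2))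
      '' simplexInt 2), (a + b) / 2 + (H : ℝ) + y ≤ x := by
    rintro x ⟨r, hr, rfl⟩
    exact hlow r hr
  have hBB : BddBelow ((fun r : Fin 2 → ℝ =>
      sSup ((fun q : Fin 2 → ℝ => Phi H (a + q 0 / r 0) (b + q 1 / r 1)) '' simplex 2))
      '' simplexInt 2) := ⟨_, fun x hx => hlb x hx⟩
  have hmemQ : sSup ((fun q : Fin 2 → ℝ =>
      Phi H (a + q 0 / ((y + d) / (2 * y))) (b + q 1 / ((y - d) / (2 * y)))) '' simplex 2)
      ∈ ((fun r : Fin 2 → ℝ =>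
      sSup ((fun q : Fin 2 → ℝ => Phi H (a + q 0 / r 0) (b + q 1 / r 1)) '' simplex 2))
      '' simplexInt 2) := ⟨_, hrstar, rfl⟩
  exact le_antisymm (le_trans (csInf_le hBB hmemQ) hup) (le_csInf ⟨_, hmemQ⟩ hlb)


lemma V_two (H : ℕ) : ∀ s : Fin 2 → ℝ, V 2 H s = Phi H (s 0) (s 1) := by
  induction H with
  | zero => exact V_zero
  | succ H ih => exact V_succ H ih

end BookmakingAux

/-- For binary games (`K = 2`), the optimal bookmaking loss is `T + √T`. -/
theorem optimal_loss_binary (T : ℕ) (hT : 1 ≤ T) :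
    V 2 T 0 = (T : ℝ) + Real.sqrt T := by
  rw [BookmakingAux.V_two T 0]
  unfold BookmakingAux.Phi
  norm_num
end
end

section
/- For every integer T ≥ 1, in the case K = 3 the optimal bookmaking loss satisfies V T 0 = T + 2·√T · cos((1/3) · arccos(T^{−1/2})). -/
open scoped BigOperators
noncomputable section
namespace OBM

def sup3 (s : Fin 3 → ℝ) : ℝ := max (s 0) (max (s 1) (s 2))

lemma iSup3 (s : Fin 3 → ℝ) : (⨆ k, s k) = sup3 s := by
  apply le_antisymm
  · exact ciSup_le fun k => by fin_cases k <;> simp [sup3, le_max_iff, le_refl]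
  · exact max_le (le_ciSup (Finite.bddAbove_range _) 0)
      (max_le (le_ciSup (Finite.bddAbove_range _) 1) (le_ciSup (Finite.bddAbove_range _) 2))

lemma le_sup3 (s : Fin 3 → ℝ) (k : Fin 3) : s k ≤ sup3 s := by
  fin_cases k <;> simp [sup3, le_max_iff, le_refl]

lemma sup3_le {s : Fin 3 → ℝ} {c : ℝ} (h : ∀ k, s k ≤ c) : sup3 s ≤ c :=
  max_le (h 0) (max_le (h 1) (h 2))

lemma sup3_mono {s t : Fin 3 → ℝ} (h : ∀ k, s k ≤ t k) : sup3 s ≤ sup3 t :=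
  sup3_le fun k => le_trans (h k) (le_sup3 t k)

lemma unif_mem : (fun _ : Fin 3 => (3:ℝ)⁻¹) ∈ simplexInt 3 := by
  constructor
  · intro k; norm_num
  · show ∑ _k : Fin 3, (3:ℝ)⁻¹ = 1
    rw [Fin.sum_univ_three]; norm_num

lemma simplexInt_subset : simplexInt 3 ⊆ simplex 3 := fun r hr => ⟨fun k => (hr.1 k).le, hr.2⟩

lemma simplexInt_nonempty : (simplexInt 3).Nonempty := ⟨_, unif_mem⟩

lemma simplex_nonempty : (simplex 3).Nonempty := ⟨_, simplexInt_subset unif_mem⟩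

/-- Joint bounds on `V`. -/
lemma V_bounds : ∀ (H : ℕ) (s : Fin 3 → ℝ),
    sup3 s ≤ V 3 H s ∧ V 3 H s ≤ sup3 s + 3 * H := by
  intro H
  induction H with
  | zero => intro s; rw [show V 3 0 s = ⨆ k, s k from rfl, iSup3]; simp
  | succ H ih =>
    intro s
    -- the inner set for a given r
    have hinner_ne : ∀ r : Fin 3 → ℝ, ((fun q : Fin 3 → ℝ =>
        V 3 H (fun k => s k + q k / r k)) '' simplex 3).Nonempty :=
      fun r => ⟨_, Set.mem_image_of_mem _ simplex_nonempty.choose_spec⟩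
    have hinner_bdd : ∀ r ∈ simplexInt 3, BddAbove ((fun q : Fin 3 → ℝ =>
        V 3 H (fun k => s k + q k / r k)) '' simplex 3) := by
      intro r hr
      refine ⟨sup3 s + ((r 0)⁻¹ + (r 1)⁻¹ + (r 2)⁻¹) + 3 * H, ?_⟩
      rintro x ⟨q, hq, rfl⟩
      have hq1 : ∀ k, q k ≤ 1 := by
        intro k
        have hsum : q 0 + q 1 + q 2 = 1 := by
          have := hq.2; rwa [Fin.sum_univ_three] at this
        have h0 := hq.1 0; have h1 := hq.1 1; have h2 := hq.1 2
        fin_cases k <;> simp <;> linarith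
      have hcoord : ∀ k, s k + q k / r k ≤ sup3 s + ((r 0)⁻¹ + (r 1)⁻¹ + (r 2)⁻¹) := by
        intro k
        have hrk := hr.1
        have hdiv : q k / r k ≤ (r k)⁻¹ := by
          rw [div_eq_mul_inv]
          nlinarith [hq.1 k, hq1 k, inv_pos.2 (hrk k), (hrk k)]
        have hle : (r k)⁻¹ ≤ (r 0)⁻¹ + (r 1)⁻¹ + (r 2)⁻¹ := by
          have i0 := inv_pos.2 (hrk 0); have i1 := inv_pos.2 (hrk 1); have i2 := inv_pos.2 (hrk 2)
          fin_cases k <;> simp <;> linarith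
        have := le_sup3 s k
        linarith
      calc V 3 H (fun k => s k + q k / r k) ≤ sup3 (fun k => s k + q k / r k) + 3 * H :=
            (ih _).2
        _ ≤ sup3 s + ((r 0)⁻¹ + (r 1)⁻¹ + (r 2)⁻¹) + 3 * H := by
            have := sup3_le hcoord; linarith
    -- every element of the outer set is ≥ sup3 s
    have houter_lb : ∀ y ∈ ((fun r : Fin 3 → ℝ =>
        sSup ((fun q : Fin 3 → ℝ => V 3 H (fun k => s k + q k / r k)) '' simplex 3))
        '' simplexInt 3), sup3 s ≤ y := by
      rintro y ⟨r, hr, rfl⟩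
      have hmem : V 3 H (fun k => s k + r k / r k) ∈
          (fun q : Fin 3 → ℝ => V 3 H (fun k => s k + q k / r k)) '' simplex 3 :=
        Set.mem_image_of_mem _ (simplexInt_subset hr)
      have h1 : (fun k => s k + r k / r k) = fun k => s k + 1 := by
        funext k; rw [div_self (ne_of_gt (hr.1 k))]
      have h2 : sup3 s ≤ V 3 H (fun k => s k + r k / r k) := by
        rw [h1]
        refine le_trans (sup3_mono fun k => ?_) (ih _).1
        linarith
      exact le_trans h2 (le_csSup (hinner_bdd r hr) hmem)
    have houter_ne : ((fun r : Fin 3 → ℝ =>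
        sSup ((fun q : Fin 3 → ℝ => V 3 H (fun k => s k + q k / r k)) '' simplex 3))
        '' simplexInt 3).Nonempty := ⟨_, Set.mem_image_of_mem _ unif_mem⟩
    constructor
    · exact le_csInf houter_ne houter_lb
    · have hle : V 3 (H+1) s ≤ sSup ((fun q : Fin 3 → ℝ =>
          V 3 H (fun k => s k + q k / (fun _ : Fin 3 => (3:ℝ)⁻¹) k)) '' simplex 3) :=
        csInf_le ⟨sup3 s, houter_lb⟩ (Set.mem_image_of_mem _ unif_mem)
      refine le_trans hle ?_
      have : ∀ q ∈ simplex 3, V 3 H (fun k => s k + q k / (fun _ : Fin 3 => (3:ℝ)⁻¹) k)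
          ≤ sup3 s + 3 * (H+1 : ℕ) := by
        intro q hq
        have hq1 : ∀ k, q k ≤ 1 := by
          intro k
          have hsum : q 0 + q 1 + q 2 = 1 := by
            have := hq.2; rwa [Fin.sum_univ_three] at this
          have h0 := hq.1 0; have h1 := hq.1 1; have h2 := hq.1 2
          fin_cases k <;> simp <;> linarith
        refine le_trans (ih _).2 ?_
        have hco : ∀ k, s k + q k / (3:ℝ)⁻¹ ≤ sup3 s + 3 := by
          intro k
          have : q k / (3:ℝ)⁻¹ = 3 * q k := by field_simp
          rw [this]
          have := le_sup3 s k; have := hq1 k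
          linarith
        have := sup3_le hco
        push_cast
        linarith
      exact csSup_le (hinner_ne _) (by rintro x ⟨q, hq, rfl⟩; exact this q hq)

lemma simplex_coords {q : Fin 3 → ℝ} (hq : q ∈ simplex 3) :
    (∀ k, 0 ≤ q k) ∧ (∀ k, q k ≤ 1) ∧ q 0 + q 1 + q 2 = 1 := by
  have hsum : q 0 + q 1 + q 2 = 1 := by
    have := hq.2; rwa [Fin.sum_univ_three] at this
  refine ⟨hq.1, fun k => ?_, hsum⟩
  have h0 := hq.1 0; have h1 := hq.1 1; have h2 := hq.1 2
  fin_cases k <;> simp <;> linarith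

lemma inner_nonempty (H : ℕ) (s r : Fin 3 → ℝ) : ((fun q : Fin 3 → ℝ =>
    V 3 H (fun k => s k + q k / r k)) '' simplex 3).Nonempty :=
  ⟨_, Set.mem_image_of_mem _ simplex_nonempty.choose_spec⟩

lemma inner_bddAbove (H : ℕ) (s : Fin 3 → ℝ) {r : Fin 3 → ℝ} (hr : r ∈ simplexInt 3) :
    BddAbove ((fun q : Fin 3 → ℝ => V 3 H (fun k => s k + q k / r k)) '' simplex 3) := by
  refine ⟨sup3 s + ((r 0)⁻¹ + (r 1)⁻¹ + (r 2)⁻¹) + 3 * H, ?_⟩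
  rintro x ⟨q, hq, rfl⟩
  obtain ⟨hq0, hq1, -⟩ := simplex_coords hq
  have hcoord : ∀ k, s k + q k / r k ≤ sup3 s + ((r 0)⁻¹ + (r 1)⁻¹ + (r 2)⁻¹) := by
    intro k
    have hrk := hr.1
    have hdiv : q k / r k ≤ (r k)⁻¹ := by
      rw [div_eq_mul_inv]
      nlinarith [hq0 k, hq1 k, inv_pos.2 (hrk k), (hrk k)]
    have hle : (r k)⁻¹ ≤ (r 0)⁻¹ + (r 1)⁻¹ + (r 2)⁻¹ := by
      have i0 := inv_pos.2 (hrk 0); have i1 := inv_pos.2 (hrk 1); have i2 := inv_pos.2 (hrk 2)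
      fin_cases k <;> simp <;> linarith
    have := le_sup3 s k
    linarith
  calc V 3 H (fun k => s k + q k / r k) ≤ sup3 (fun k => s k + q k / r k) + 3 * H :=
        (V_bounds H _).2
    _ ≤ _ := by have := sup3_le hcoord; linarith

lemma outer_lb (H : ℕ) (s : Fin 3 → ℝ) : ∀ y ∈ ((fun r : Fin 3 → ℝ =>
    sSup ((fun q : Fin 3 → ℝ => V 3 H (fun k => s k + q k / r k)) '' simplex 3))
    '' simplexInt 3), sup3 s ≤ y := by
  rintro y ⟨r, hr, rfl⟩
  have hmem : V 3 H (fun k => s k + r k / r k) ∈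
      (fun q : Fin 3 → ℝ => V 3 H (fun k => s k + q k / r k)) '' simplex 3 :=
    Set.mem_image_of_mem _ (simplexInt_subset hr)
  have h1 : (fun k => s k + r k / r k) = fun k => s k + 1 := by
    funext k; rw [div_self (ne_of_gt (hr.1 k))]
  have h2 : sup3 s ≤ V 3 H (fun k => s k + r k / r k) := by
    rw [h1]
    refine le_trans (sup3_mono fun k => ?_) (V_bounds H _).1
    linarith
  exact le_trans h2 (le_csSup (inner_bddAbove H s hr) hmem)

lemma outer_bddBelow (H : ℕ) (s : Fin 3 → ℝ) : BddBelow ((fun r : Fin 3 → ℝ =>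
    sSup ((fun q : Fin 3 → ℝ => V 3 H (fun k => s k + q k / r k)) '' simplex 3))
    '' simplexInt 3) := ⟨sup3 s, outer_lb H s⟩

lemma V_mono : ∀ (H : ℕ) {s t : Fin 3 → ℝ}, (∀ k, s k ≤ t k) → V 3 H s ≤ V 3 H t := by
  intro H
  induction H with
  | zero =>
    intro s t h
    rw [show V 3 0 s = ⨆ k, s k from rfl, show V 3 0 t = ⨆ k, t k from rfl, iSup3, iSup3]
    exact sup3_le fun k => le_trans (h k) (le_sup3 t k)
  | succ H ih =>
    intro s t h
    refine le_csInf ⟨_, Set.mem_image_of_mem _ unif_mem⟩ ?_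
    rintro y ⟨r, hr, rfl⟩
    have step1 : V 3 (H+1) s ≤ sSup ((fun q : Fin 3 → ℝ =>
        V 3 H (fun k => s k + q k / r k)) '' simplex 3) :=
      csInf_le (outer_bddBelow H s) (Set.mem_image_of_mem _ hr)
    refine le_trans step1 (csSup_le (inner_nonempty H s r) ?_)
    rintro x ⟨q, hq, rfl⟩
    refine le_trans (ih fun k => add_le_add_left (h k) _)
      (le_csSup (inner_bddAbove H t hr) (Set.mem_image_of_mem _ hq))

/-- The certificate polynomial: `FC n b₀ b₁ b₂ = b₀b₁b₂ - n(b₀+b₁+b₂) - 2n`. -/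
def FC (n b0 b1 b2 : ℝ) : ℝ := b0*b1*b2 - n*(b0+b1+b2) - 2*n

lemma shift_id (n u0 u1 u2 x0 x1 x2 : ℝ) :
    FC n (u0-x0) (u1-x1) (u2-x2)
      = FC (n+1) (u0-1) (u1-1) (u2-1) + ((u1*u2-n)+(u0*u2-n)+(u0*u1-n))
        - (x0*(u1*u2-n)+x1*(u0*u2-n)+x2*(u0*u1-n))
        + (x0*x1*(u2-x2) + x0*x2*u1 + x1*x2*u0) := by
  unfold FC; ring

lemma pairprod {n b0 b1 b2 : ℝ} (hn : 0 ≤ n) (h0 : 0 ≤ b0) (h1 : 0 ≤ b1) (h2 : 0 ≤ b2)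
    (hF : 0 ≤ FC (n+1) b0 b1 b2) : n + 1 < b1 * b2 := by
  unfold FC at hF
  have hb0 : 0 < b0 := by nlinarith [mul_nonneg h1 h2]
  nlinarith [mul_nonneg h1 h2, mul_pos hb0 hb0]

lemma step_facts {n u0 u1 u2 : ℝ} (hn : 0 ≤ n) (h0 : 1 ≤ u0) (h1 : 1 ≤ u1) (h2 : 1 ≤ u2)
    (hF : 0 ≤ FC (n+1) (u0-1) (u1-1) (u2-1)) :
    (0 < u1*u2 - n ∧ 0 < u0*u2 - n ∧ 0 < u0*u1 - n) ∧
    ((u1*u2-n)+(u0*u2-n)+(u0*u1-n)) ≤ u0*(u1*u2-n) ∧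
    ((u1*u2-n)+(u0*u2-n)+(u0*u1-n)) ≤ u1*(u0*u2-n) ∧
    ((u1*u2-n)+(u0*u2-n)+(u0*u1-n)) ≤ u2*(u0*u1-n) := by
  have p12 : n + 1 < (u1-1) * (u2-1) :=
    pairprod hn (by linarith) (by linarith) (by linarith) hF
  have p02 : n + 1 < (u0-1) * (u2-1) := by
    have : FC (n+1) (u1-1) (u0-1) (u2-1) = FC (n+1) (u0-1) (u1-1) (u2-1) := by unfold FC; ring
    exact pairprod hn (by linarith) (by linarith) (by linarith) (this ▸ hF)
  have p01 : n + 1 < (u0-1) * (u1-1) := by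
    have : FC (n+1) (u2-1) (u0-1) (u1-1) = FC (n+1) (u0-1) (u1-1) (u2-1) := by unfold FC; ring
    exact pairprod hn (by linarith) (by linarith) (by linarith) (this ▸ hF)
  have g0 : 0 < u1*u2 - n := by nlinarith
  have g1 : 0 < u0*u2 - n := by nlinarith
  have g2 : 0 < u0*u1 - n := by nlinarith
  unfold FC at hF
  refine ⟨⟨g0, g1, g2⟩, ?_, ?_, ?_⟩
  · nlinarith [mul_nonneg hn (by linarith : (0:ℝ) ≤ u1 + u2 + 2)]
  · nlinarith [mul_nonneg hn (by linarith : (0:ℝ) ≤ u0 + u2 + 2)]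
  · nlinarith [mul_nonneg hn (by linarith : (0:ℝ) ≤ u0 + u1 + 2)]

set_option maxHeartbeats 4000000 in
theorem V_le_of_cert : ∀ (n : ℕ) (s : Fin 3 → ℝ) (ℓ : ℝ),
    (∀ k, 0 ≤ ℓ - s k - n) →
    0 ≤ FC n (ℓ - s 0 - n) (ℓ - s 1 - n) (ℓ - s 2 - n) →
    V 3 n s ≤ ℓ := by
  intro n
  induction n with
  | zero =>
    intro s ℓ hβ _
    rw [show V 3 0 s = ⨆ k, s k from rfl, iSup3]
    exact sup3_le fun k => by have := hβ k; push_cast at this; linarith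
  | succ n ih =>
    intro s ℓ hβ hF
    have hu0 : 1 ≤ ℓ - s 0 - (n:ℝ) := by have := hβ 0; push_cast at this; linarith
    have hu1 : 1 ≤ ℓ - s 1 - (n:ℝ) := by have := hβ 1; push_cast at this; linarith
    have hu2 : 1 ≤ ℓ - s 2 - (n:ℝ) := by have := hβ 2; push_cast at this; linarith
    set u0 := ℓ - s 0 - (n:ℝ) with hu0d
    set u1 := ℓ - s 1 - (n:ℝ) with hu1d
    set u2 := ℓ - s 2 - (n:ℝ) with hu2d
    have hF' : 0 ≤ FC ((n:ℝ)+1) (u0-1) (u1-1) (u2-1) := by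
      push_cast at hF
      have e : FC ((n:ℝ)+1) (u0-1) (u1-1) (u2-1)
          = FC ((n:ℝ)+1) (ℓ - s 0 - ((n:ℝ)+1)) (ℓ - s 1 - ((n:ℝ)+1)) (ℓ - s 2 - ((n:ℝ)+1)) := by
        rw [hu0d, hu1d, hu2d]; unfold FC; ring
      rw [e]; exact hF
    obtain ⟨⟨gA, gB, gC⟩, mA, mB, mC⟩ :=
      step_facts (by positivity) hu0 hu1 hu2 hF'
    set A := u1*u2 - (n:ℝ) with hAd
    set B := u0*u2 - (n:ℝ) with hBd
    set C := u0*u1 - (n:ℝ) with hCd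
    have hS : 0 < A + B + C := by linarith
    set S := A + B + C with hSd
    set rstar : Fin 3 → ℝ := ![A/S, B/S, C/S] with hrd
    have hr0 : rstar 0 = A/S := rfl
    have hr1 : rstar 1 = B/S := rfl
    have hr2 : rstar 2 = C/S := rfl
    have hrs : rstar ∈ simplexInt 3 := by
      constructor
      · intro k; fin_cases k
        · exact div_pos gA hS
        · exact div_pos gB hS
        · exact div_pos gC hS
      · show ∑ k, rstar k = 1
        rw [Fin.sum_univ_three, hr0, hr1, hr2, ← add_div, ← add_div,
          div_self (ne_of_gt hS)]
    refine le_trans (csInf_le (outer_bddBelow n s) (Set.mem_image_of_mem _ hrs)) ?_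
    refine csSup_le (inner_nonempty n s rstar) ?_
    rintro x ⟨q, hq, rfl⟩
    obtain ⟨hq0, hq1, hqs⟩ := simplex_coords hq
    set x0 := q 0 / rstar 0 with hx0d
    set x1 := q 1 / rstar 1 with hx1d
    set x2 := q 2 / rstar 2 with hx2d
    have hx0e : x0 = q 0 * S / A := by rw [hx0d, hr0, div_div_eq_mul_div]
    have hx1e : x1 = q 1 * S / B := by rw [hx1d, hr1, div_div_eq_mul_div]
    have hx2e : x2 = q 2 * S / C := by rw [hx2d, hr2, div_div_eq_mul_div]
    have hx0g : x0 * A = q 0 * S := by rw [hx0e, div_mul_cancel₀ _ (ne_of_gt gA)]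
    have hx1g : x1 * B = q 1 * S := by rw [hx1e, div_mul_cancel₀ _ (ne_of_gt gB)]
    have hx2g : x2 * C = q 2 * S := by rw [hx2e, div_mul_cancel₀ _ (ne_of_gt gC)]
    have hx0n : 0 ≤ x0 := by
      rw [hx0e]; exact div_nonneg (mul_nonneg (hq0 0) hS.le) gA.le
    have hx1n : 0 ≤ x1 := by
      rw [hx1e]; exact div_nonneg (mul_nonneg (hq0 1) hS.le) gB.le
    have hx2n : 0 ≤ x2 := by
      rw [hx2e]; exact div_nonneg (mul_nonneg (hq0 2) hS.le) gC.le
    have hx0u : x0 ≤ u0 := by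
      rw [hx0e, div_le_iff₀ gA]
      nlinarith [mA, hq1 0, hq0 0, hS]
    have hx1u : x1 ≤ u1 := by
      rw [hx1e, div_le_iff₀ gB]
      nlinarith [mB, hq1 1, hq0 1, hS]
    have hx2u : x2 ≤ u2 := by
      rw [hx2e, div_le_iff₀ gC]
      nlinarith [mC, hq1 2, hq0 2, hS]
    have hβ' : ∀ k, 0 ≤ ℓ - (s k + q k / rstar k) - (n:ℝ) := by
      intro k; fin_cases k
      · show 0 ≤ ℓ - (s 0 + x0) - (n:ℝ); rw [hu0d] at hx0u; linarith
      · show 0 ≤ ℓ - (s 1 + x1) - (n:ℝ); rw [hu1d] at hx1u; linarith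
      · show 0 ≤ ℓ - (s 2 + x2) - (n:ℝ); rw [hu2d] at hx2u; linarith
    have hFnew : 0 ≤ FC (n:ℝ) (ℓ - (s 0 + x0) - (n:ℝ)) (ℓ - (s 1 + x1) - (n:ℝ))
        (ℓ - (s 2 + x2) - (n:ℝ)) := by
      have e0 : ℓ - (s 0 + x0) - (n:ℝ) = u0 - x0 := by rw [hu0d]; ring
      have e1 : ℓ - (s 1 + x1) - (n:ℝ) = u1 - x1 := by rw [hu1d]; ring
      have e2 : ℓ - (s 2 + x2) - (n:ℝ) = u2 - x2 := by rw [hu2d]; ring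
      rw [e0, e1, e2]
      have key := shift_id (n:ℝ) u0 u1 u2 x0 x1 x2
      rw [← hAd, ← hBd, ← hCd] at key
      have hE0 : 0 ≤ x0*x1*(u2-x2) := mul_nonneg (mul_nonneg hx0n hx1n) (by linarith)
      have hE1 : 0 ≤ x0*x2*u1 := mul_nonneg (mul_nonneg hx0n hx2n) (by linarith)
      have hE2 : 0 ≤ x1*x2*u0 := mul_nonneg (mul_nonneg hx1n hx2n) (by linarith)
      have hsum : x0*A + x1*B + x2*C = S := by
        rw [hx0g, hx1g, hx2g]; linear_combination S * hqs
      rw [key]; linarith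
    exact ih _ ℓ hβ' hFnew

set_option maxHeartbeats 1000000 in
theorem V_ge_of_cert : ∀ (n : ℕ) (s : Fin 3 → ℝ) (ℓ : ℝ),
    (∀ k, 0 ≤ ℓ - s k - n) →
    FC n (ℓ - s 0 - n) (ℓ - s 1 - n) (ℓ - s 2 - n) = 0 →
    ℓ ≤ V 3 n s := by
  intro n
  induction n with
  | zero =>
    intro s ℓ hβ hF
    rw [show V 3 0 s = ⨆ k, s k from rfl, iSup3]
    have h0 := hβ 0; have h1 := hβ 1; have h2 := hβ 2
    push_cast at h0 h1 h2 hF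
    unfold FC at hF
    have hprod : (ℓ - s 0) * ((ℓ - s 1) * (ℓ - s 2)) = 0 := by linarith [hF]
    rcases mul_eq_zero.mp hprod with h | h
    · exact le_trans (by linarith) (le_sup3 s 0)
    · rcases mul_eq_zero.mp h with h' | h'
      · exact le_trans (by linarith) (le_sup3 s 1)
      · exact le_trans (by linarith) (le_sup3 s 2)
  | succ n ih =>
    intro s ℓ hβ hF
    have hu0 : 1 ≤ ℓ - s 0 - (n:ℝ) := by have := hβ 0; push_cast at this; linarith
    have hu1 : 1 ≤ ℓ - s 1 - (n:ℝ) := by have := hβ 1; push_cast at this; linarith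
    have hu2 : 1 ≤ ℓ - s 2 - (n:ℝ) := by have := hβ 2; push_cast at this; linarith
    set u0 := ℓ - s 0 - (n:ℝ) with hu0d
    set u1 := ℓ - s 1 - (n:ℝ) with hu1d
    set u2 := ℓ - s 2 - (n:ℝ) with hu2d
    have hF' : FC ((n:ℝ)+1) (u0-1) (u1-1) (u2-1) = 0 := by
      push_cast at hF
      have e : FC ((n:ℝ)+1) (u0-1) (u1-1) (u2-1)
          = FC ((n:ℝ)+1) (ℓ - s 0 - ((n:ℝ)+1)) (ℓ - s 1 - ((n:ℝ)+1)) (ℓ - s 2 - ((n:ℝ)+1)) := by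
        rw [hu0d, hu1d, hu2d]; unfold FC; ring
      rw [e]; exact hF
    obtain ⟨⟨gA, gB, gC⟩, mA, mB, mC⟩ :=
      step_facts (by positivity) hu0 hu1 hu2 (le_of_eq hF'.symm)
    set A := u1*u2 - (n:ℝ) with hAd
    set B := u0*u2 - (n:ℝ) with hBd
    set C := u0*u1 - (n:ℝ) with hCd
    have hS : 0 < A + B + C := by linarith
    set S := A + B + C with hSd
    refine le_csInf ⟨_, Set.mem_image_of_mem _ unif_mem⟩ ?_
    rintro y ⟨r, hr, rfl⟩
    have hrsum : r 0 + r 1 + r 2 = 1 := by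
      have := hr.2; rwa [Fin.sum_univ_three] at this
    have hrpos := hr.1
    have hchoice : r 0 ≤ A/S ∨ r 1 ≤ B/S ∨ r 2 ≤ C/S := by
      by_contra h
      push_neg at h
      obtain ⟨h0, h1, h2⟩ := h
      have hsum1 : A/S + B/S + C/S = 1 := by
        rw [← add_div, ← add_div, div_self (ne_of_gt hS)]
      linarith
    -- helper facts for all three cases
    have hkey : ∀ c : ℝ, FC (n:ℝ) (u0-c) u1 u2
        = FC ((n:ℝ)+1) (u0-1) (u1-1) (u2-1) + S - c*A := by
      intro c; rw [hSd, hAd, hBd, hCd]; unfold FC; ring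
    have hkey1 : ∀ c : ℝ, FC (n:ℝ) u0 (u1-c) u2
        = FC ((n:ℝ)+1) (u0-1) (u1-1) (u2-1) + S - c*B := by
      intro c; rw [hSd, hAd, hBd, hCd]; unfold FC; ring
    have hkey2 : ∀ c : ℝ, FC (n:ℝ) u0 u1 (u2-c)
        = FC ((n:ℝ)+1) (u0-1) (u1-1) (u2-1) + S - c*C := by
      intro c; rw [hSd, hAd, hBd, hCd]; unfold FC; ring
    rcases hchoice with hc | hc | hc
    · -- bet on coordinate 0
      set c := S / A with hcd
      have hcA : c * A = S := div_mul_cancel₀ _ (ne_of_gt gA)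
      have hcn : 0 ≤ c := le_of_lt (div_pos hS gA)
      have hcu : c ≤ u0 := by rw [hcd, div_le_iff₀ gA]; linarith [mA]
      have hq : (![1, 0, 0] : Fin 3 → ℝ) ∈ simplex 3 := by
        refine ⟨fun k => by fin_cases k <;> norm_num, ?_⟩
        rw [Fin.sum_univ_three]; norm_num [Matrix.cons_val_two]
      have hstate : ℓ ≤ V 3 n (fun j => s j + (![1, 0, 0] : Fin 3 → ℝ) j / r j) := by
        have hIH : ℓ ≤ V 3 n (fun j => s j + (![c, 0, 0] : Fin 3 → ℝ) j) := by
          refine ih _ ℓ ?_ ?_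
          · intro k; fin_cases k
            · show 0 ≤ ℓ - (s 0 + c) - (n:ℝ); rw [hu0d] at hcu; linarith
            · show 0 ≤ ℓ - (s 1 + 0) - (n:ℝ); rw [hu1d] at hu1; linarith
            · show 0 ≤ ℓ - (s 2 + 0) - (n:ℝ); rw [hu2d] at hu2; linarith
          · show FC (n:ℝ) (ℓ - (s 0 + c) - (n:ℝ)) (ℓ - (s 1 + 0) - (n:ℝ))
                (ℓ - (s 2 + 0) - (n:ℝ)) = 0
            have e0 : ℓ - (s 0 + c) - (n:ℝ) = u0 - c := by rw [hu0d]; ring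
            have e1 : ℓ - (s 1 + 0) - (n:ℝ) = u1 := by rw [hu1d]; ring
            have e2 : ℓ - (s 2 + 0) - (n:ℝ) = u2 := by rw [hu2d]; ring
            rw [e0, e1, e2, hkey c, hF', hcA]; ring
        refine le_trans hIH (V_mono n fun j => ?_)
        fin_cases j
        · show s 0 + c ≤ s 0 + 1 / r 0
          have : c ≤ 1 / r 0 := by
            rw [hcd, div_le_div_iff₀ gA (hrpos 0), one_mul]
            calc S * r 0 ≤ S * (A/S) := by
                  exact mul_le_mul_of_nonneg_left hc hS.le
              _ = A := by field_simp
          linarith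
        · simp
        · simp
      refine le_trans hstate (le_csSup (inner_bddAbove n s hr) ?_)
      exact Set.mem_image_of_mem _ hq
    · -- bet on coordinate 1
      set c := S / B with hcd
      have hcB : c * B = S := div_mul_cancel₀ _ (ne_of_gt gB)
      have hcn : 0 ≤ c := le_of_lt (div_pos hS gB)
      have hcu : c ≤ u1 := by rw [hcd, div_le_iff₀ gB]; linarith [mB]
      have hq : (![0, 1, 0] : Fin 3 → ℝ) ∈ simplex 3 := by
        refine ⟨fun k => by fin_cases k <;> norm_num, ?_⟩
        rw [Fin.sum_univ_three]; norm_num [Matrix.cons_val_two]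
      have hstate : ℓ ≤ V 3 n (fun j => s j + (![0, 1, 0] : Fin 3 → ℝ) j / r j) := by
        have hIH : ℓ ≤ V 3 n (fun j => s j + (![0, c, 0] : Fin 3 → ℝ) j) := by
          refine ih _ ℓ ?_ ?_
          · intro k; fin_cases k
            · show 0 ≤ ℓ - (s 0 + 0) - (n:ℝ); rw [hu0d] at hu0; linarith
            · show 0 ≤ ℓ - (s 1 + c) - (n:ℝ); rw [hu1d] at hcu; linarith
            · show 0 ≤ ℓ - (s 2 + 0) - (n:ℝ); rw [hu2d] at hu2; linarith
          · show FC (n:ℝ) (ℓ - (s 0 + 0) - (n:ℝ)) (ℓ - (s 1 + c) - (n:ℝ))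
                (ℓ - (s 2 + 0) - (n:ℝ)) = 0
            have e0 : ℓ - (s 0 + 0) - (n:ℝ) = u0 := by rw [hu0d]; ring
            have e1 : ℓ - (s 1 + c) - (n:ℝ) = u1 - c := by rw [hu1d]; ring
            have e2 : ℓ - (s 2 + 0) - (n:ℝ) = u2 := by rw [hu2d]; ring
            rw [e0, e1, e2, hkey1 c, hF', hcB]; ring
        refine le_trans hIH (V_mono n fun j => ?_)
        fin_cases j
        · simp
        · show s 1 + c ≤ s 1 + 1 / r 1
          have : c ≤ 1 / r 1 := by
            rw [hcd, div_le_div_iff₀ gB (hrpos 1), one_mul]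
            calc S * r 1 ≤ S * (B/S) := by
                  exact mul_le_mul_of_nonneg_left hc hS.le
              _ = B := by field_simp
          linarith
        · simp
      refine le_trans hstate (le_csSup (inner_bddAbove n s hr) ?_)
      exact Set.mem_image_of_mem _ hq
    · -- bet on coordinate 2
      set c := S / C with hcd
      have hcC : c * C = S := div_mul_cancel₀ _ (ne_of_gt gC)
      have hcn : 0 ≤ c := le_of_lt (div_pos hS gC)
      have hcu : c ≤ u2 := by rw [hcd, div_le_iff₀ gC]; linarith [mC]
      have hq : (![0, 0, 1] : Fin 3 → ℝ) ∈ simplex 3 := by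
        refine ⟨fun k => by fin_cases k <;> norm_num, ?_⟩
        rw [Fin.sum_univ_three]; norm_num [Matrix.cons_val_two]
      have hstate : ℓ ≤ V 3 n (fun j => s j + (![0, 0, 1] : Fin 3 → ℝ) j / r j) := by
        have hIH : ℓ ≤ V 3 n (fun j => s j + (![0, 0, c] : Fin 3 → ℝ) j) := by
          refine ih _ ℓ ?_ ?_
          · intro k; fin_cases k
            · show 0 ≤ ℓ - (s 0 + 0) - (n:ℝ); rw [hu0d] at hu0; linarith
            · show 0 ≤ ℓ - (s 1 + 0) - (n:ℝ); rw [hu1d] at hu1; linarith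
            · show 0 ≤ ℓ - (s 2 + c) - (n:ℝ); rw [hu2d] at hcu; linarith
          · show FC (n:ℝ) (ℓ - (s 0 + 0) - (n:ℝ)) (ℓ - (s 1 + 0) - (n:ℝ))
                (ℓ - (s 2 + c) - (n:ℝ)) = 0
            have e0 : ℓ - (s 0 + 0) - (n:ℝ) = u0 := by rw [hu0d]; ring
            have e1 : ℓ - (s 1 + 0) - (n:ℝ) = u1 := by rw [hu1d]; ring
            have e2 : ℓ - (s 2 + c) - (n:ℝ) = u2 - c := by rw [hu2d]; ring
            rw [e0, e1, e2, hkey2 c, hF', hcC]; ring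
        refine le_trans hIH (V_mono n fun j => ?_)
        fin_cases j
        · simp
        · simp
        · show s 2 + c ≤ s 2 + 1 / r 2
          have : c ≤ 1 / r 2 := by
            rw [hcd, div_le_div_iff₀ gC (hrpos 2), one_mul]
            calc S * r 2 ≤ S * (C/S) := by
                  exact mul_le_mul_of_nonneg_left hc hS.le
              _ = C := by field_simp
          linarith
      refine le_trans hstate (le_csSup (inner_bddAbove n s hr) ?_)
      exact Set.mem_image_of_mem _ hq

end OBM

open OBM in
/-- For ternary games (`K = 3`), the optimal bookmaking loss is
`T + 2√T · cos((1/3) arccos (T^{-1/2}))`. -/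
theorem optimal_loss_ternary (T : ℕ) (hT : 1 ≤ T) :
    V 3 T 0 = (T : ℝ) +
      2 * Real.sqrt T * Real.cos ((1 / 3) * Real.arccos ((T : ℝ) ^ (-(1 : ℝ) / 2))) := by
  have hT1 : (1:ℝ) ≤ (T:ℝ) := by exact_mod_cast hT
  have hTpos : (0:ℝ) < (T:ℝ) := by linarith
  set st := Real.sqrt (T:ℝ) with hstd
  have hst1 : 1 ≤ st := by
    rw [hstd, show (1:ℝ) = Real.sqrt 1 from (Real.sqrt_one).symm]
    exact Real.sqrt_le_sqrt hT1
  have hstsq : st * st = (T:ℝ) := Real.mul_self_sqrt hTpos.le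
  set y := (T:ℝ) ^ (-(1 : ℝ) / 2) with hyd
  have hy : y = st⁻¹ := by
    rw [hyd, hstd, Real.sqrt_eq_rpow, show (-(1:ℝ)/2) = -(1/(2:ℝ)) by norm_num,
      Real.rpow_neg hTpos.le]
  have hys : st * y = 1 := by
    rw [hy]; exact mul_inv_cancel₀ (by linarith)
  have hy0 : 0 ≤ y := by rw [hy]; positivity
  have hy1 : y ≤ 1 := by
    rw [hy]
    have : (0:ℝ) < st := by linarith
    rw [inv_le_one_iff₀]; right; exact hst1
  set θ := Real.arccos y with hθd
  have hθ0 : 0 ≤ θ := Real.arccos_nonneg y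
  have hθpi : θ ≤ Real.pi := Real.arccos_le_pi y
  set c := Real.cos ((1/3) * θ) with hcd
  have hc0 : 0 ≤ c := by
    rw [hcd]
    apply Real.cos_nonneg_of_mem_Icc
    have := Real.pi_pos
    constructor
    · nlinarith
    · nlinarith
  have h3 : 4 * c ^ 3 - 3 * c = y := by
    rw [hcd, ← Real.cos_three_mul, show 3 * ((1/3) * θ) = θ by ring, hθd]
    exact Real.cos_arccos (by linarith) hy1
  set x := 2 * st * c with hxd
  have hx0 : 0 ≤ x := by rw [hxd]; positivity
  have hx3 : x * x * x - 3 * (T:ℝ) * x - 2 * (T:ℝ) = 0 := by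
    rw [hxd]
    linear_combination (8*c^3*st) * hstsq + (2*(T:ℝ)*st) * h3 + (2*(T:ℝ)) * hys
  set ℓ := (T:ℝ) + x with hℓd
  have harg : ∀ k : Fin 3, ℓ - (0 : Fin 3 → ℝ) k - (T:ℝ) = x := by
    intro k; simp [hℓd]
  have hβ : ∀ k : Fin 3, 0 ≤ ℓ - (0 : Fin 3 → ℝ) k - (T:ℝ) := by
    intro k; rw [harg k]; exact hx0
  have hFx : FC (T:ℝ) (ℓ - (0 : Fin 3 → ℝ) 0 - (T:ℝ)) (ℓ - (0 : Fin 3 → ℝ) 1 - (T:ℝ))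
      (ℓ - (0 : Fin 3 → ℝ) 2 - (T:ℝ)) = 0 := by
    rw [harg 0, harg 1, harg 2]
    unfold FC
    linear_combination hx3
  have hmain : V 3 T 0 = ℓ :=
    le_antisymm (V_le_of_cert T 0 ℓ hβ (le_of_eq hFx.symm)) (V_ge_of_cert T 0 ℓ hβ hFx)
  rw [hmain, hℓd, hxd, hcd, hθd, hyd, hstd]
end
end

section
/- For all integers K ≥ 1, H ≥ 1 and every s : Fin K → ℝ, the supremum over mixed bets in the recursion of the value function may be restricted to the vertices of the simplex: V H s = ⨅_{r ∈ Δ°_K} max_{k ∈ Fin K} V (H−1) (s + (1/(r k))·e_k). -/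
open scoped BigOperators

noncomputable section

/-- vertex value function -/
noncomputable def Fvert (K H : ℕ) (s r : Fin K → ℝ) : ℝ :=
  ⨆ k : Fin K, V K H (fun j => s j + (if j = k then 1 / r k else 0))

lemma vert_mem_simplex {K : ℕ} (k : Fin K) :
    (fun j => if j = k then (1:ℝ) else 0) ∈ simplex K := by
  constructor
  · intro j; by_cases h : j = k <;> simp [h]
  · simp [Finset.sum_ite_eq']

lemma vert_arg {K : ℕ} (s r : Fin K → ℝ) (k : Fin K) :
    (fun j => s j + (if j = k then (1:ℝ) else 0) / r j)
      = fun j => s j + (if j = k then 1 / r k else 0) := by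
  funext j
  by_cases h : j = k
  · subst h; simp
  · simp [h]

/-- vertex reduction: the sup over the simplex equals the max over vertices. -/
lemma vertexReduce {K H : ℕ} (hK : 0 < K)
    (hmono : Monotone (V K H)) (hconv : ConvexOn ℝ Set.univ (V K H))
    (s r : Fin K → ℝ) (hr : r ∈ simplexInt K) :
    sSup ((fun q : Fin K → ℝ => V K H (fun k => s k + q k / r k)) '' simplex K)
      = Fvert K H s r := by
  have : Nonempty (Fin K) := ⟨⟨0, hK⟩⟩
  set x : Fin K → (Fin K → ℝ) := fun k => fun j => s j + (if j = k then 1 / r k else 0)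
    with hx
  have hbR : BddAbove (Set.range fun k => V K H (x k)) :=
    (Set.finite_range _).bddAbove
  -- every simplex point's value is below the max over vertices
  have key : ∀ q ∈ simplex K, V K H (fun k => s k + q k / r k) ≤ Fvert K H s r := by
    intro q hq
    have hsum : (fun k => s k + q k / r k) = ∑ k, q k • x k := by
      funext j
      rw [Finset.sum_apply]
      have : ∀ k, (q k • x k) j = q k * s j + (if j = k then q k / r k else 0) := by
        intro k
        by_cases h : j = k
        · subst h
          have hxv : x j j = s j + 1 / r j := by simp [hx]
          rw [Pi.smul_apply, hxv, smul_eq_mul, if_pos rfl]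
          ring
        · have hxv : x k j = s j := by simp [hx, h]
          rw [Pi.smul_apply, hxv, smul_eq_mul, if_neg h, add_zero]
      rw [Finset.sum_congr rfl fun k _ => this k, Finset.sum_add_distrib,
        ← Finset.sum_mul, hq.2]
      simp [Finset.sum_ite_eq]
    have hjensen := hconv.map_sum_le (t := Finset.univ) (w := q) (p := x)
      (fun i _ => hq.1 i) hq.2 (fun i _ => Set.mem_univ _)
    rw [hsum]
    refine hjensen.trans ?_
    have : ∀ k ∈ Finset.univ, q k • V K H (x k) ≤ q k * Fvert K H s r := by
      intro k _
      exact mul_le_mul_of_nonneg_left (le_ciSup hbR k) (hq.1 k)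
    refine (Finset.sum_le_sum this).trans ?_
    rw [← Finset.sum_mul, hq.2, one_mul]
  have hne : ((fun q : Fin K → ℝ => V K H (fun k => s k + q k / r k)) '' simplex K).Nonempty :=
    ⟨_, ⟨_, vert_mem_simplex ⟨0, hK⟩, rfl⟩⟩
  apply le_antisymm
  · apply csSup_le hne
    rintro _ ⟨q, hq, rfl⟩
    exact key q hq
  · apply ciSup_le
    intro k
    apply le_csSup
    · exact ⟨Fvert K H s r, by rintro _ ⟨q, hq, rfl⟩; exact key q hq⟩
    · exact ⟨fun j => if j = k then 1 else 0, vert_mem_simplex k, by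
        simp only []; rw [vert_arg]⟩

lemma simplexInt_nonempty {K : ℕ} (hK : 0 < K) : (simplexInt K).Nonempty := by
  refine ⟨fun _ => 1 / K, fun k => by positivity, ?_⟩
  simp
  field_simp

lemma Fvert_mono {K H : ℕ} (hmono : Monotone (V K H)) {s t : Fin K → ℝ} (hst : s ≤ t)
    (r : Fin K → ℝ) : Fvert K H s r ≤ Fvert K H t r := by
  apply ciSup_mono (Set.finite_range _).bddAbove
  intro k
  apply hmono
  intro j
  exact add_le_add (hst j) le_rfl

lemma Fvert_lb {K H : ℕ} (hK : 0 < K) (hmono : Monotone (V K H)) (s r : Fin K → ℝ)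
    (hr : r ∈ simplexInt K) : V K H s ≤ Fvert K H s r := by
  have : Nonempty (Fin K) := ⟨⟨0, hK⟩⟩
  refine le_trans ?_ (le_ciSup (Set.finite_range _).bddAbove ⟨0, hK⟩)
  apply hmono
  intro j
  have h0 : (0:ℝ) < r ⟨0, hK⟩ := hr.1 _
  have : (0:ℝ) ≤ if j = (⟨0, hK⟩ : Fin K) then 1 / r ⟨0, hK⟩ else 0 := by
    split
    · exact le_of_lt (div_pos one_pos h0)
    · exact le_refl 0
  exact le_add_of_nonneg_right this

lemma V_succ_eq {K H : ℕ} (hK : 0 < K) (hmono : Monotone (V K H))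
    (hconv : ConvexOn ℝ Set.univ (V K H)) (s : Fin K → ℝ) :
    V K (H + 1) s = sInf (Fvert K H s '' simplexInt K) := by
  rw [V]
  congr 1
  apply Set.image_congr
  intro r hr
  exact vertexReduce hK hmono hconv s r hr

lemma V_mono_conv (K : ℕ) (hK : 0 < K) (H : ℕ) :
    Monotone (V K H) ∧ ConvexOn ℝ Set.univ (V K H) := by
  have hne : Nonempty (Fin K) := ⟨⟨0, hK⟩⟩
  induction H with
  | zero =>
    constructor
    · intro s t hst
      exact ciSup_mono (Set.finite_range _).bddAbove hst
    · refine ⟨convex_univ, ?_⟩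
      intro p _ q _ a b ha hb hab
      simp only [V, smul_eq_mul]
      refine ciSup_le fun k => ?_
      have h1 : p k ≤ ⨆ j, p j := le_ciSup (Set.finite_range _).bddAbove k
      have h2 : q k ≤ ⨆ j, q j := le_ciSup (Set.finite_range _).bddAbove k
      have hk : (a • p + b • q) k = a * p k + b * q k := by
        simp [smul_eq_mul]
      rw [hk]
      exact add_le_add (mul_le_mul_of_nonneg_left h1 ha)
        (mul_le_mul_of_nonneg_left h2 hb)
  | succ H ih =>
    obtain ⟨hm, hc⟩ := ih
    have hbb : ∀ s : Fin K → ℝ, BddBelow (Fvert K H s '' simplexInt K) := by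
      intro s
      exact ⟨V K H s, by rintro _ ⟨r', hr', rfl⟩; exact Fvert_lb hK hm s r' hr'⟩
    have hneA : ∀ s : Fin K → ℝ, (Fvert K H s '' simplexInt K).Nonempty :=
      fun s => (simplexInt_nonempty hK).image _
    constructor
    · intro s t hst
      rw [V_succ_eq hK hm hc, V_succ_eq hK hm hc]
      apply le_csInf (hneA t)
      rintro _ ⟨r, hr, rfl⟩
      exact (csInf_le (hbb s) ⟨r, hr, rfl⟩).trans (Fvert_mono hm hst r)
    · refine ⟨convex_univ, ?_⟩
      intro p _ q _ a b ha hb hab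
      simp only [smul_eq_mul]
      rw [V_succ_eq hK hm hc, V_succ_eq hK hm hc, V_succ_eq hK hm hc]
      apply le_of_forall_pos_le_add
      intro ε hε
      obtain ⟨_, ⟨r1, hr1, rfl⟩, h1⟩ := Real.lt_sInf_add_pos (hneA p) hε
      obtain ⟨_, ⟨r2, hr2, rfl⟩, h2⟩ := Real.lt_sInf_add_pos (hneA q) hε
      set u : Fin K → ℝ := fun k => a / r1 k + b / r2 k with hu
      have hupos : ∀ k, 0 < u k := by
        intro k
        have h1k := hr1.1 k
        have h2k := hr2.1 k
        have hor : 0 < a / r1 k ∨ 0 < b / r2 k := by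
          rcases eq_or_lt_of_le ha with h | h
          · right; exact div_pos (by linarith) h2k
          · left; exact div_pos h h1k
        have hna : 0 ≤ a / r1 k := div_nonneg ha h1k.le
        have hnb : 0 ≤ b / r2 k := div_nonneg hb h2k.le
        show 0 < a / r1 k + b / r2 k
        rcases hor with h | h
        · linarith
        · linarith
      set S : ℝ := ∑ k, (u k)⁻¹ with hS
      have hSpos : 0 < S := by
        apply Finset.sum_pos (fun k _ => inv_pos.mpr (hupos k)) Finset.univ_nonempty
      have hS1 : S ≤ 1 := by
        have hk : ∀ k : Fin K, (u k)⁻¹ ≤ a * r1 k + b * r2 k := by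
          intro k
          have h1k := hr1.1 k
          have h2k := hr2.1 k
          rw [inv_eq_one_div, div_le_iff₀ (hupos k)]
          show 1 ≤ (a * r1 k + b * r2 k) * (a / r1 k + b / r2 k)
          rw [div_add_div _ _ h1k.ne' h2k.ne', ← mul_div_assoc,
            le_div_iff₀ (mul_pos h1k h2k), one_mul]
          have key : (a * r1 k + b * r2 k) * (a * r2 k + r1 k * b)
              = r1 k * r2 k * (a + b) ^ 2 + a * b * (r1 k - r2 k) ^ 2 := by ring
          rw [hab, one_pow, mul_one] at key
          have hnn : 0 ≤ a * b * (r1 k - r2 k) ^ 2 :=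
            mul_nonneg (mul_nonneg ha hb) (sq_nonneg _)
          linarith
        calc S ≤ ∑ k, (a * r1 k + b * r2 k) := Finset.sum_le_sum fun k _ => hk k
          _ = a * (∑ k, r1 k) + b * (∑ k, r2 k) := by
              rw [Finset.sum_add_distrib, Finset.mul_sum, Finset.mul_sum]
          _ = 1 := by rw [hr1.2, hr2.2]; linarith
      set r' : Fin K → ℝ := fun k => (u k)⁻¹ / S with hr'def
      have hr' : r' ∈ simplexInt K := by
        constructor
        · intro k; exact div_pos (inv_pos.mpr (hupos k)) hSpos
        · show (∑ k, (u k)⁻¹ / S) = 1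
          rw [← Finset.sum_div, ← hS, div_self hSpos.ne']
      have hkey : Fvert K H (a • p + b • q) r' ≤ a * Fvert K H p r1 + b * Fvert K H q r2 := by
        apply ciSup_le
        intro k
        have h1r : 1 / r' k = S * u k := by
          show 1 / ((u k)⁻¹ / S) = S * u k
          rw [one_div, inv_div, div_eq_mul_inv, inv_inv]
        set x1 : Fin K → ℝ := fun j => p j + if j = k then 1 / r1 k else 0 with hx1
        set x2 : Fin K → ℝ := fun j => q j + if j = k then 1 / r2 k else 0 with hx2
        have step1 : (fun j => (a • p + b • q) j + if j = k then 1 / r' k else 0)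
            ≤ a • x1 + b • x2 := by
          intro j
          have hval : (a • x1 + b • x2) j
              = a * p j + b * q j + if j = k then u k else 0 := by
            by_cases h : j = k
            · subst h
              simp only [Pi.add_apply, Pi.smul_apply, hx1, hx2, smul_eq_mul,
                if_pos rfl, hu, if_true, one_div]
              ring
            · simp [hx1, hx2, h]
          rw [hval]
          simp only [Pi.add_apply, Pi.smul_apply, smul_eq_mul]
          apply add_le_add (le_refl _)
          split_ifs with h
          · rw [h1r]
            exact mul_le_of_le_one_left (hupos k).le hS1
          · exact le_refl 0
        have step2 : V K H (fun j => (a • p + b • q) j + if j = k then 1 / r' k else 0)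
            ≤ V K H (a • x1 + b • x2) := hm step1
        have step3 : V K H (a • x1 + b • x2) ≤ a * V K H x1 + b * V K H x2 := by
          have := hc.2 (Set.mem_univ x1) (Set.mem_univ x2) ha hb hab
          simpa [smul_eq_mul] using this
        have step4 : V K H x1 ≤ Fvert K H p r1 := by
          unfold Fvert
          rw [hx1]
          exact le_ciSup (f := fun i => V K H fun j => p j + if j = i then 1 / r1 i else 0)
            (Set.finite_range _).bddAbove k
        have step5 : V K H x2 ≤ Fvert K H q r2 := by
          unfold Fvert
          rw [hx2]
          exact le_ciSup (f := fun i => V K H fun j => q j + if j = i then 1 / r2 i else 0)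
            (Set.finite_range _).bddAbove k
        calc V K H (fun j => (a • p + b • q) j + if j = k then 1 / r' k else 0)
            ≤ a * V K H x1 + b * V K H x2 := step2.trans step3
          _ ≤ a * Fvert K H p r1 + b * Fvert K H q r2 :=
              add_le_add (mul_le_mul_of_nonneg_left step4 ha)
                (mul_le_mul_of_nonneg_left step5 hb)
      have hI : sInf (Fvert K H (a • p + b • q) '' simplexInt K)
          ≤ Fvert K H (a • p + b • q) r' := csInf_le (hbb _) ⟨r', hr', rfl⟩
      have hfin : a * Fvert K H p r1 + b * Fvert K H q r2
          ≤ a * sInf (Fvert K H p '' simplexInt K)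
            + b * sInf (Fvert K H q '' simplexInt K) + ε := by
        have e1 : a * Fvert K H p r1 ≤ a * (sInf (Fvert K H p '' simplexInt K) + ε) :=
          mul_le_mul_of_nonneg_left h1.le ha
        have e2 : b * Fvert K H q r2 ≤ b * (sInf (Fvert K H q '' simplexInt K) + ε) :=
          mul_le_mul_of_nonneg_left h2.le hb
        have : a * (sInf (Fvert K H p '' simplexInt K) + ε)
            + b * (sInf (Fvert K H q '' simplexInt K) + ε)
            = a * sInf (Fvert K H p '' simplexInt K)
              + b * sInf (Fvert K H q '' simplexInt K) + (a + b) * ε := by ring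
        rw [hab, one_mul] at this
        linarith
      exact (hI.trans hkey).trans hfin

/-- The supremum over mixed bets in the value-function recursion can be restricted
to decisive bets (vertices of the simplex). -/
theorem decisive_gambler_optimal (K H : ℕ) (hK : 1 ≤ K) (hH : 1 ≤ H) (s : Fin K → ℝ) :
    V K H s =
      sInf ((fun r : Fin K → ℝ =>
        ⨆ k : Fin K, V K (H - 1) (fun j => s j + (if j = k then 1 / r k else 0)))
        '' simplexInt K) := by
  obtain ⟨H', rfl⟩ : ∃ H', H = H' + 1 := ⟨H - 1, (Nat.succ_pred_eq_of_pos hH).symm⟩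
  obtain ⟨hm, hc⟩ := V_mono_conv K hK H'
  have h := V_succ_eq hK hm hc s
  simp only [Nat.add_sub_cancel]
  exact h
end
end

section
/- For all integers K ≥ 1, H ≥ 1 and every s : Fin K → ℝ, there exists a unique r* ∈ Δ°_K such that V (H−1) (s + (1/(r* k))·e_k) = V H s for every k ∈ Fin K. -/
open scoped BigOperators
noncomputable section
namespace UEO
def pt {K : ℕ} (s : Fin K → ℝ) (k : Fin K) (t : ℝ) : Fin K → ℝ :=
  fun j => s j + if j = k then t else 0
lemma pt_zero {K : ℕ} (s : Fin K → ℝ) (k : Fin K) : pt s k 0 = s := by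
  funext j; simp [pt]
lemma pt_apply_self {K : ℕ} (s : Fin K → ℝ) (k : Fin K) (t : ℝ) : pt s k t k = s k + t := by
  simp [pt]
lemma V_zero {K : ℕ} (s : Fin K → ℝ) : V K 0 s = ⨆ k, s k := rfl
lemma V_succ {K H : ℕ} (s : Fin K → ℝ) :
    V K (H + 1) s = sInf ((fun r : Fin K → ℝ =>
        sSup ((fun q : Fin K → ℝ => V K H (fun k => s k + q k / r k)) '' simplex K))
        '' simplexInt K) := rfl
structure Good (K H : ℕ) : Prop where
  mono : ∀ s s' : Fin K → ℝ, (∀ j, s j ≤ s' j) → V K H s ≤ V K H s'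
  shift : ∀ (s : Fin K → ℝ) (δ : ℝ), V K H (fun j => s j + δ) = V K H s + δ
  lower : ∀ (s : Fin K → ℝ) (j : Fin K), s j + H ≤ V K H s
  convex : ConvexOn ℝ Set.univ (V K H)
  flat : ∀ (s : Fin K → ℝ) (k : Fin K) (t t' : ℝ), 0 ≤ t → t < t' →
    V K H (pt s k t) = V K H (pt s k t') →
    ∃ i, i ≠ k ∧ V K H (pt s k t) ≤ s i + H

lemma combo_pos {a b u v : ℝ} (ha : 0 ≤ a) (hb : 0 ≤ b) (hab : a + b = 1)
    (hu : 0 < u) (hv : 0 < v) : 0 < a * u + b * v := by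
  rcases lt_or_ge 0 a with h | h
  · nlinarith [mul_pos h hu, mul_nonneg hb hv.le]
  · have ha0 : a = 0 := le_antisymm h ha
    have hb1 : b = 1 := by linarith
    rw [ha0, hb1]; linarith

lemma one_div_combo {a b u v : ℝ} (ha : 0 ≤ a) (hb : 0 ≤ b) (hab : a + b = 1)
    (hu : 0 < u) (hv : 0 < v) : 1 / (a * u + b * v) ≤ a * (1 / u) + b * (1 / v) := by
  have hpos : 0 < a * u + b * v := combo_pos ha hb hab hu hv
  rw [div_le_iff₀ hpos]
  have h1 : (a * (1 / u) + b * (1 / v)) * (a * u + b * v)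
      = a ^ 2 + b ^ 2 + a * b * (v / u + u / v) := by
    field_simp; ring
  rw [h1]
  have h2 : 2 ≤ v / u + u / v := by
    rw [div_add_div _ _ (ne_of_gt hu) (ne_of_gt hv), le_div_iff₀ (by positivity)]
    nlinarith [sq_nonneg (u - v)]
  nlinarith [mul_le_mul_of_nonneg_left h2 (mul_nonneg ha hb)]

lemma good_zero {K : ℕ} (hK : 0 < K) : Good K 0 := by
  haveI : Nonempty (Fin K) := ⟨⟨0, hK⟩⟩
  constructor
  · intro s s' h
    exact ciSup_mono (Finite.bddAbove_range s') h
  · intro s δ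
    rw [V_zero, V_zero]
    apply le_antisymm
    · exact ciSup_le fun k => add_le_add_left (le_ciSup (Finite.bddAbove_range s) k) δ
    · rw [← le_sub_iff_add_le]
      exact ciSup_le fun k => le_sub_iff_add_le.2
        (le_ciSup (Finite.bddAbove_range fun j => s j + δ) k)
  · intro s j
    rw [V_zero]
    simpa using le_ciSup (Finite.bddAbove_range s) j
  · refine ⟨convex_univ, ?_⟩
    intro x _ y _ a b ha hb hab
    rw [V_zero]
    refine ciSup_le fun k => ?_
    simp only [Pi.add_apply, Pi.smul_apply, smul_eq_mul]
    have hx : x k ≤ V K 0 x := by rw [V_zero]; exact le_ciSup (Finite.bddAbove_range x) k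
    have hy : y k ≤ V K 0 y := by rw [V_zero]; exact le_ciSup (Finite.bddAbove_range y) k
    nlinarith
  · intro s k t t' ht htt' hflat
    obtain ⟨i, hi⟩ := Finite.exists_max (pt s k t)
    have hival : V K 0 (pt s k t) = pt s k t i := le_antisymm (ciSup_le hi)
      (le_ciSup (Finite.bddAbove_range _) i)
    have hik : i ≠ k := by
      intro h
      rw [h] at hival
      have h1 : pt s k t' k ≤ V K 0 (pt s k t') := by
        rw [V_zero]; exact le_ciSup (Finite.bddAbove_range _) k
      rw [← hflat, hival] at h1
      simp only [pt_apply_self] at h1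
      linarith
    refine ⟨i, hik, ?_⟩
    rw [hival]
    simp [pt, if_neg hik]


section roots
variable {K H : ℕ}

lemma mono_pt (gd : Good K H) (s : Fin K → ℝ) (k : Fin K) {t t' : ℝ} (h : t ≤ t') :
    V K H (pt s k t) ≤ V K H (pt s k t') :=
  gd.mono _ _ (fun j => by by_cases hj : j = k <;> simp [pt, hj, h])

lemma lip_pt (gd : Good K H) (s : Fin K → ℝ) (k : Fin K) {t t' : ℝ} (h : t ≤ t') :
    V K H (pt s k t') ≤ V K H (pt s k t) + (t' - t) := by
  have h1 : V K H (fun j => pt s k t j + (t' - t)) = V K H (pt s k t) + (t' - t) :=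
    gd.shift _ _
  rw [← h1]
  apply gd.mono
  intro j
  by_cases hj : j = k <;> simp [pt, hj] <;> linarith

lemma cont_pt (gd : Good K H) (s : Fin K → ℝ) (k : Fin K) :
    Continuous (fun t => V K H (pt s k t)) := by
  have : LipschitzWith 1 (fun t => V K H (pt s k t)) := by
    apply LipschitzWith.of_dist_le_mul
    intro x y
    rw [NNReal.coe_one, one_mul, Real.dist_eq, Real.dist_eq]
    rcases le_total x y with h | h
    · have h1 := mono_pt gd s k h
      have h2 := lip_pt gd s k h
      rw [abs_of_nonpos (by linarith), abs_of_nonpos (by linarith)]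
      linarith
    · have h1 := mono_pt gd s k h
      have h2 := lip_pt gd s k h
      rw [abs_of_nonneg (by linarith), abs_of_nonneg (by linarith)]
      linarith
  exact this.continuous

lemma root_exists (gd : Good K H) (s : Fin K → ℝ) (k : Fin K) {c : ℝ}
    (hc : V K H s < c) : ∃ t, 0 < t ∧ V K H (pt s k t) = c := by
  have hlow := gd.lower s k
  set T := c - s k - H with hT
  have hT0 : 0 ≤ T := by simp only [hT]; linarith
  have hfT : c ≤ V K H (pt s k T) := by
    have := gd.lower (pt s k T) k
    rw [pt_apply_self] at this
    simp only [hT] at this ⊢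
    linarith
  have h0 : V K H (pt s k 0) = V K H s := by rw [pt_zero]
  have hmem : c ∈ Set.Icc (V K H (pt s k 0)) (V K H (pt s k T)) := by
    constructor
    · rw [h0]; exact hc.le
    · exact hfT
  obtain ⟨t, ht, hfeq⟩ := intermediate_value_Icc hT0 ((cont_pt gd s k).continuousOn) hmem
  change V K H (pt s k t) = c at hfeq
  refine ⟨t, ?_, hfeq⟩
  rcases eq_or_lt_of_le ht.1 with h | h
  · exfalso
    rw [← h, h0] at hfeq
    exact absurd hfeq (ne_of_lt hc)
  · exact h

lemma root_unique (gd : Good K H) (s : Fin K → ℝ) (k : Fin K) {c t t' : ℝ}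
    (hc : V K H s < c) (ht : 0 ≤ t) (ht' : 0 ≤ t')
    (h1 : V K H (pt s k t) = c) (h2 : V K H (pt s k t') = c) : t = t' := by
  have aux : ∀ u u' : ℝ, 0 ≤ u → u < u' → V K H (pt s k u) = c → V K H (pt s k u') = c → False := by
    intro u u' hu huu' hru hru'
    obtain ⟨i, hik, hle⟩ := gd.flat s k u u' hu huu' (hru.trans hru'.symm)
    have := gd.lower s i
    rw [hru] at hle
    linarith
  rcases lt_trichotomy t t' with h | h | h
  · exact (aux t t' ht h h1 h2).elim
  · exact h
  · exact (aux t' t ht' h h2 h1).elim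

lemma root_lt (gd : Good K H) (s : Fin K → ℝ) (k : Fin K) {c c' t t' : ℝ}
    (h1 : V K H (pt s k t) = c) (h2 : V K H (pt s k t') = c') (hcc' : c < c') : t < t' := by
  by_contra h
  push_neg at h
  have := mono_pt gd s k h
  rw [h1, h2] at this
  linarith

lemma vertex_mem {K : ℕ} (k : Fin K) :
    (fun j => if j = k then (1:ℝ) else 0) ∈ simplex K := by
  refine ⟨fun j => ?_, ?_⟩
  · dsimp only; split <;> norm_num
  · simp

/-- evaluation of `V (H+1)` at an equalizer -/
lemma eval_succ (hK : 0 < K) (gd : Good K H) (s : Fin K → ℝ) (r : Fin K → ℝ) (c : ℝ)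
    (hr : r ∈ simplexInt K)
    (hroot : ∀ k, V K H (pt s k (1 / r k)) = c) :
    V K (H + 1) s = c := by
  haveI : Nonempty (Fin K) := ⟨⟨0, hK⟩⟩
  classical
  have hrw : ∀ r' : Fin K → ℝ, ∀ q ∈ simplex K,
      (fun j => s j + q j / r' j) = ∑ k, q k • pt s k (1 / r' k) := by
    intro r' q hq
    funext j
    rw [Finset.sum_apply]
    have h1 : ∀ k, (q k • pt s k (1 / r' k)) j
        = q k * s j + (if j = k then q k * (1 / r' k) else 0) := by
      intro k
      by_cases h : j = k <;> simp [pt, h, mul_add]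
    simp_rw [h1]
    rw [Finset.sum_add_distrib, ← Finset.sum_mul, hq.2, Finset.sum_ite_eq]
    rw [if_pos (Finset.mem_univ j), one_mul, mul_one_div]
  have jensen : ∀ r' : Fin K → ℝ, ∀ q ∈ simplex K,
      V K H (fun j => s j + q j / r' j) ≤ ∑ k, q k * V K H (pt s k (1 / r' k)) := by
    intro r' q hq
    rw [hrw r' q hq]
    have := gd.convex.map_sum_le (t := Finset.univ) (w := q) (p := fun k => pt s k (1 / r' k))
      (fun i _ => hq.1 i) hq.2 (fun i _ => Set.mem_univ _)
    simpa [smul_eq_mul] using this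
  have hvertex : ∀ (r' : Fin K → ℝ) (k : Fin K),
      (fun j => s j + (if j = k then (1:ℝ) else 0) / r' j) = pt s k (1 / r' k) := by
    intro r' k
    funext j
    by_cases h : j = k <;> simp [pt, h]
  have hbdd : ∀ r' : Fin K → ℝ,
      BddAbove ((fun q : Fin K → ℝ => V K H (fun j => s j + q j / r' j)) '' simplex K) := by
    intro r'
    refine ⟨Finset.univ.sup' Finset.univ_nonempty (fun k => V K H (pt s k (1 / r' k))), ?_⟩
    rintro x ⟨q, hq, rfl⟩
    refine le_trans (jensen r' q hq) ?_
    calc ∑ k, q k * V K H (pt s k (1 / r' k))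
        ≤ ∑ k, q k * Finset.univ.sup' Finset.univ_nonempty
            (fun k => V K H (pt s k (1 / r' k))) := by
          apply Finset.sum_le_sum
          intro i _
          exact mul_le_mul_of_nonneg_left
            (Finset.le_sup' (f := fun k => V K H (pt s k (1 / r' k))) (Finset.mem_univ i))
            (hq.1 i)
      _ = Finset.univ.sup' Finset.univ_nonempty (fun k => V K H (pt s k (1 / r' k))) := by
          rw [← Finset.sum_mul, hq.2, one_mul]
  have hne : ∀ r' : Fin K → ℝ,
      ((fun q : Fin K → ℝ => V K H (fun j => s j + q j / r' j)) '' simplex K).Nonempty := by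
    intro r'
    exact ⟨_, Set.mem_image_of_mem _ (vertex_mem (Classical.arbitrary (Fin K)))⟩
  have hvert_le : ∀ (r' : Fin K → ℝ) (k : Fin K),
      V K H (pt s k (1 / r' k)) ≤
        sSup ((fun q : Fin K → ℝ => V K H (fun j => s j + q j / r' j)) '' simplex K) := by
    intro r' k
    apply le_csSup (hbdd r')
    refine ⟨fun j => if j = k then (1:ℝ) else 0, vertex_mem k, ?_⟩
    show V K H (fun j => s j + (if j = k then (1:ℝ) else 0) / r' j) = _
    rw [hvertex r' k]
  have hsup_rstar : sSup ((fun q : Fin K → ℝ =>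
      V K H (fun j => s j + q j / r j)) '' simplex K) = c := by
    apply le_antisymm
    · apply csSup_le (hne r)
      rintro x ⟨q, hq, rfl⟩
      refine le_trans (jensen r q hq) (le_of_eq ?_)
      calc ∑ k, q k * V K H (pt s k (1 / r k)) = ∑ k, q k * c := by
            apply Finset.sum_congr rfl; intro k _; rw [hroot k]
        _ = c := by rw [← Finset.sum_mul, hq.2, one_mul]
    · have := hvert_le r (Classical.arbitrary (Fin K))
      rw [hroot] at this
      exact this
  have hlb : ∀ x ∈ (fun r' : Fin K → ℝ =>
      sSup ((fun q : Fin K → ℝ => V K H (fun j => s j + q j / r' j)) '' simplex K))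
        '' simplexInt K, c ≤ x := by
    rintro x ⟨r', hr', rfl⟩
    have hk : ∃ k, r' k ≤ r k := by
      by_contra hcon
      push_neg at hcon
      have : (1:ℝ) < 1 := by
        calc (1:ℝ) = ∑ k, r k := hr.2.symm
          _ < ∑ k, r' k := Finset.sum_lt_sum_of_nonempty Finset.univ_nonempty
              (fun k _ => hcon k)
          _ = 1 := hr'.2
      linarith
    obtain ⟨k, hk⟩ := hk
    have h1 : 1 / r k ≤ 1 / r' k := one_div_le_one_div_of_le (hr'.1 k) hk
    have h2 : c ≤ V K H (pt s k (1 / r' k)) := by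
      rw [← hroot k]
      exact mono_pt gd s k h1
    exact le_trans h2 (hvert_le r' k)
  rw [V_succ]
  apply le_antisymm
  · calc sInf ((fun r' : Fin K → ℝ =>
        sSup ((fun q : Fin K → ℝ => V K H (fun j => s j + q j / r' j)) '' simplex K))
        '' simplexInt K) ≤ sSup ((fun q : Fin K → ℝ =>
          V K H (fun j => s j + q j / r j)) '' simplex K) :=
          csInf_le ⟨c, hlb⟩ (Set.mem_image_of_mem _ hr)
      _ = c := hsup_rstar
  · exact le_csInf ⟨_, Set.mem_image_of_mem _ hr⟩ hlb


/-- characterization: `V (H+1) s` is the equalized value -/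
lemma char (hK : 0 < K) (gd : Good K H) (s : Fin K → ℝ) :
    ∃ (t : Fin K → ℝ) (c : ℝ),
      (∀ k, 0 < t k) ∧ (∑ k, 1 / t k = 1) ∧ (∀ k, V K H (pt s k (t k)) = c) ∧
      V K H s < c ∧ V K (H + 1) s = c := by
  haveI : Nonempty (Fin K) := ⟨⟨0, hK⟩⟩
  classical
  obtain ⟨tk, htkpos, htkroot⟩ :
      ∃ tk : Fin K → ℝ → ℝ, (∀ k c, V K H s < c → 0 < tk k c) ∧
        (∀ k c, V K H s < c → V K H (pt s k (tk k c)) = c) := by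
    have hex : ∀ (k : Fin K) (c : ℝ), V K H s < c → ∃ u, 0 < u ∧ V K H (pt s k u) = c :=
      fun k c hc => root_exists gd s k hc
    refine ⟨fun k c => if h : V K H s < c then (hex k c h).choose else 1, ?_, ?_⟩
    · intro k c hc; dsimp only; rw [dif_pos hc]; exact (hex k c hc).choose_spec.1
    · intro k c hc; dsimp only; rw [dif_pos hc]; exact (hex k c hc).choose_spec.2
  have tk_cont : ∀ k : Fin K, ContinuousOn (fun c => tk k c) (Set.Ioi (V K H s)) := by
    intro k
    rw [Metric.continuousOn_iff]
    intro c₀ hc₀ ε hε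
    rw [Set.mem_Ioi] at hc₀
    have ht₀ : 0 < tk k c₀ := htkpos k c₀ hc₀
    set t₀ := tk k c₀ with ht₀def
    set ε' := min ε (t₀ / 2) with hε'def
    have hε' : 0 < ε' := lt_min hε (by linarith)
    have hε'le : ε' ≤ t₀ / 2 := min_le_right _ _
    have hε'ε : ε' ≤ ε := min_le_left _ _
    have h1 : V K H (pt s k (t₀ - ε')) < c₀ := by
      rcases lt_or_eq_of_le (mono_pt gd s k (show t₀ - ε' ≤ t₀ by linarith)) with h | h
      · rwa [htkroot k c₀ hc₀] at h
      · exfalso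
        have heq := root_unique gd s k hc₀ (show (0:ℝ) ≤ t₀ - ε' by linarith) ht₀.le
          (h.trans (htkroot k c₀ hc₀)) (htkroot k c₀ hc₀)
        linarith
    have h2 : c₀ < V K H (pt s k (t₀ + ε')) := by
      rcases lt_or_eq_of_le (mono_pt gd s k (show t₀ ≤ t₀ + ε' by linarith)) with h | h
      · rwa [htkroot k c₀ hc₀] at h
      · exfalso
        have heq := root_unique gd s k hc₀ ht₀.le (show (0:ℝ) ≤ t₀ + ε' by linarith)
          (htkroot k c₀ hc₀) (h.symm.trans (htkroot k c₀ hc₀))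
        linarith
    refine ⟨min (c₀ - V K H (pt s k (t₀ - ε'))) (V K H (pt s k (t₀ + ε')) - c₀),
      lt_min (by linarith) (by linarith), ?_⟩
    intro c hc hdist
    rw [Set.mem_Ioi] at hc
    rw [Real.dist_eq] at hdist
    have habs := abs_lt.1 hdist
    have hm1 : min (c₀ - V K H (pt s k (t₀ - ε'))) (V K H (pt s k (t₀ + ε')) - c₀)
        ≤ c₀ - V K H (pt s k (t₀ - ε')) := min_le_left _ _
    have hm2 : min (c₀ - V K H (pt s k (t₀ - ε'))) (V K H (pt s k (t₀ + ε')) - c₀)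
        ≤ V K H (pt s k (t₀ + ε')) - c₀ := min_le_right _ _
    have hlo : V K H (pt s k (t₀ - ε')) < c := by
      have := habs.1; linarith
    have hhi : c < V K H (pt s k (t₀ + ε')) := by
      have := habs.2; linarith
    have hL : t₀ - ε' < tk k c := root_lt gd s k rfl (htkroot k c hc) hlo
    have hR : tk k c < t₀ + ε' := root_lt gd s k (htkroot k c hc) rfl hhi
    rw [Real.dist_eq, abs_lt]
    constructor <;> linarith
  have φcont : ContinuousOn (fun c => ∑ k, 1 / tk k c) (Set.Ioi (V K H s)) := by
    apply continuousOn_finset_sum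
    intro k _
    exact continuousOn_const.div (tk_cont k)
      (fun c hc => ne_of_gt (htkpos k c (Set.mem_Ioi.1 hc)))
  have tk_ge : ∀ (k : Fin K) (c : ℝ), V K H s < c → c - V K H s ≤ tk k c := by
    intro k c hc
    have h := lip_pt gd s k (htkpos k c hc).le
    rw [htkroot k c hc, pt_zero] at h
    linarith
  set c₁ : ℝ := V K H s + (K + 1) with hc₁def
  have hKr : (0:ℝ) ≤ K := Nat.cast_nonneg K
  have hc₁ : V K H s < c₁ := by rw [hc₁def]; linarith
  have hφc₁ : ∑ k, 1 / tk k c₁ < 1 := by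
    have hb : ∀ k : Fin K, 1 / tk k c₁ ≤ 1 / (K + 1 : ℝ) := by
      intro k
      apply one_div_le_one_div_of_le (by linarith)
      have := tk_ge k c₁ hc₁
      rw [hc₁def] at this
      linarith
    calc ∑ k, 1 / tk k c₁ ≤ ∑ _k : Fin K, 1 / (K + 1 : ℝ) :=
          Finset.sum_le_sum (fun k _ => hb k)
      _ = (K : ℝ) * (1 / (K + 1 : ℝ)) := by
          rw [Finset.sum_const, Finset.card_univ, Fintype.card_fin, nsmul_eq_mul]
      _ < 1 := by
          rw [mul_one_div, div_lt_one (by linarith)]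
          linarith
  obtain ⟨km, hkm⟩ := Finite.exists_max s
  have hVlow := gd.lower s km
  obtain ⟨c₀, hc₀V, hc₀le, hφc₀⟩ :
      ∃ c₀, V K H s < c₀ ∧ c₀ ≤ c₁ ∧ 1 ≤ ∑ k, 1 / tk k c₀ := by
    by_cases hcase : V K H s ≤ s km + H
    · refine ⟨V K H s + 1/2, by linarith, by rw [hc₁def]; linarith, ?_⟩
      have hc₀V : V K H s < V K H s + 1/2 := by linarith
      have hup : tk km (V K H s + 1/2) ≤ 1/2 := by
        have h := gd.lower (pt s km (tk km (V K H s + 1/2))) km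
        rw [pt_apply_self, htkroot km _ hc₀V] at h
        linarith
      have h1 : (1:ℝ) ≤ 1 / tk km (V K H s + 1/2) := by
        rw [le_div_iff₀ (htkpos km _ hc₀V)]; linarith
      calc (1:ℝ) ≤ 1 / tk km (V K H s + 1/2) := h1
        _ ≤ ∑ k, 1 / tk k (V K H s + 1/2) :=
            Finset.single_le_sum
              (fun k _ => (one_div_pos.2 (htkpos k _ hc₀V)).le) (Finset.mem_univ km)
    · push_neg at hcase
      have hmono0 : V K H s ≤ V K H (pt s km 1) := by
        have := mono_pt gd s km (zero_le_one (α := ℝ))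
        rwa [pt_zero] at this
      have hstrict : V K H s < V K H (pt s km 1) := by
        rcases lt_or_eq_of_le hmono0 with h | h
        · exact h
        · exfalso
          obtain ⟨i, hik, hle⟩ := gd.flat s km 0 1 le_rfl one_pos
            (by rw [pt_zero]; exact h)
          rw [pt_zero] at hle
          have := hkm i
          linarith
      have hc₀le' : V K H (pt s km 1) ≤ c₁ := by
        have h := lip_pt gd s km (zero_le_one (α := ℝ))
        rw [pt_zero] at h
        rw [hc₁def]
        linarith
      refine ⟨V K H (pt s km 1), hstrict, hc₀le', ?_⟩
      have h1root : tk km (V K H (pt s km 1)) = 1 :=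
        root_unique gd s km hstrict (htkpos km _ hstrict).le zero_le_one
          (htkroot km _ hstrict) rfl
      have h1 : (1:ℝ) ≤ 1 / tk km (V K H (pt s km 1)) := by rw [h1root]; norm_num
      calc (1:ℝ) ≤ 1 / tk km (V K H (pt s km 1)) := h1
        _ ≤ ∑ k, 1 / tk k (V K H (pt s km 1)) :=
            Finset.single_le_sum
              (fun k _ => (one_div_pos.2 (htkpos k _ hstrict)).le) (Finset.mem_univ km)
  have hsub : Set.Icc c₀ c₁ ⊆ Set.Ioi (V K H s) :=
    fun c hc => lt_of_lt_of_le hc₀V hc.1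
  obtain ⟨cs, hcsIcc, hφcs⟩ := intermediate_value_Icc' hc₀le (φcont.mono hsub)
    (Set.mem_Icc.2 ⟨hφc₁.le, hφc₀⟩)
  have hcsV : V K H s < cs := lt_of_lt_of_le hc₀V hcsIcc.1
  have hφcs' : ∑ k, 1 / tk k cs = 1 := hφcs
  refine ⟨fun k => tk k cs, cs, fun k => htkpos k cs hcsV, hφcs',
    fun k => htkroot k cs hcsV, hcsV, ?_⟩
  have hrmem : (fun k => 1 / tk k cs) ∈ simplexInt K :=
    ⟨fun k => one_div_pos.2 (htkpos k cs hcsV), hφcs'⟩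
  apply eval_succ hK gd s _ cs hrmem
  intro k
  show V K H (pt s k (1 / (1 / tk k cs))) = cs
  rw [one_div_one_div]
  exact htkroot k cs hcsV


lemma value_le (hK : 0 < K) (gd : Good K H) (s : Fin K → ℝ) (cb : ℝ) (T : Fin K → ℝ)
    (hc : V K H s < cb) (hTpos : ∀ k, 0 < T k) (hTroot : ∀ k, V K H (pt s k (T k)) = cb)
    (hTsum : ∑ k, 1 / T k ≤ 1) : V K (H + 1) s ≤ cb := by
  haveI : Nonempty (Fin K) := ⟨⟨0, hK⟩⟩
  obtain ⟨t, c, htpos, hsum, hroot, hcV, hval⟩ := char hK gd s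
  rw [hval]
  by_contra hlt
  push_neg at hlt
  have hk : ∀ k, T k < t k := fun k => root_lt gd s k (hTroot k) (hroot k) hlt
  have hcontra : (1:ℝ) < 1 := by
    calc (1:ℝ) = ∑ k, 1 / t k := hsum.symm
      _ < ∑ k, 1 / T k := Finset.sum_lt_sum_of_nonempty Finset.univ_nonempty
          (fun k _ => one_div_lt_one_div_of_lt (hTpos k) (hk k))
      _ ≤ 1 := hTsum
  linarith

lemma good_succ (hK : 0 < K) (gd : Good K H) : Good K (H + 1) := by
  haveI : Nonempty (Fin K) := ⟨⟨0, hK⟩⟩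
  have hlower : ∀ (s : Fin K → ℝ) (j : Fin K), s j + ((H : ℝ) + 1) ≤ V K (H + 1) s := by
    intro s j
    obtain ⟨t, c, htpos, hsum, hroot, hcV, hval⟩ := char hK gd s
    rw [hval]
    have ht1 : 1 ≤ t j := by
      have h1 : 1 / t j ≤ ∑ k, 1 / t k :=
        Finset.single_le_sum (fun k _ => (one_div_pos.2 (htpos k)).le)
          (Finset.mem_univ j)
      rw [hsum] at h1
      rwa [div_le_one (htpos j)] at h1
    have h2 := gd.lower (pt s j (t j)) j
    rw [pt_apply_self, hroot j] at h2
    linarith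
  refine ⟨?_, ?_, ?_, ?_, ?_⟩
  · -- mono
    intro s s' hss
    obtain ⟨t', c', ht'pos, h'sum, h'root, h'cV, h'val⟩ := char hK gd s'
    rw [h'val]
    have hcV : V K H s < c' := lt_of_le_of_lt (gd.mono s s' hss) h'cV
    have hex : ∀ k, ∃ u, 0 < u ∧ V K H (pt s k u) = c' := fun k => root_exists gd s k hcV
    choose T hTpos hTroot using hex
    apply value_le hK gd s c' T hcV hTpos hTroot
    have hle : ∀ k, t' k ≤ T k := by
      intro k
      by_contra h
      push_neg at h
      have hup : V K H (pt s k (t' k)) ≤ c' := by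
        rw [← h'root k]
        apply gd.mono
        intro j
        by_cases hj : j = k <;> simp only [pt, hj, if_pos, if_neg, ite_true, ite_false]
        · exact add_le_add_left (hss k) _
        · simpa using hss j
      have hdn : c' ≤ V K H (pt s k (t' k)) := by
        rw [← hTroot k]; exact mono_pt gd s k h.le
      have heq := le_antisymm hup hdn
      have := root_unique gd s k hcV (hTpos k).le (ht'pos k).le (hTroot k) heq
      linarith
    calc ∑ k, 1 / T k ≤ ∑ k, 1 / t' k := Finset.sum_le_sum
          (fun k _ => one_div_le_one_div_of_le (ht'pos k) (hle k))
      _ = 1 := h'sum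
  · -- shift
    intro s δ
    obtain ⟨t, c, htpos, hsum, hroot, hcV, hval⟩ := char hK gd s
    have h2 : V K (H + 1) (fun j => s j + δ) = c + δ := by
      apply eval_succ hK gd _ (fun k => 1 / t k) (c + δ)
        ⟨fun k => one_div_pos.2 (htpos k), hsum⟩
      intro k
      show V K H (pt (fun j => s j + δ) k (1 / (1 / t k))) = c + δ
      rw [one_div_one_div]
      have hpt : pt (fun j => s j + δ) k (t k) = fun j => pt s k (t k) j + δ := by
        funext j
        by_cases hj : j = k <;> simp [pt, hj] <;> ring
      rw [hpt, gd.shift, hroot k]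
    rw [h2, hval]
  · -- lower
    intro s j
    have := hlower s j
    push_cast
    linarith
  · -- convex
    refine ⟨convex_univ, ?_⟩
    intro x _ y _ a b ha hb hab
    obtain ⟨tA, cA, hApos, hAsum, hAroot, hAcV, hAval⟩ := char hK gd x
    obtain ⟨tB, cB, hBpos, hBsum, hBroot, hBcV, hBval⟩ := char hK gd y
    rw [hAval, hBval]
    simp only [smul_eq_mul]
    have hVs : V K H (a • x + b • y) ≤ a * V K H x + b * V K H y := by
      have := gd.convex.2 (Set.mem_univ x) (Set.mem_univ y) ha hb hab
      simpa [smul_eq_mul] using this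
    have hsc : V K H (a • x + b • y) < a * cA + b * cB := by
      rcases lt_or_ge 0 a with h | h
      · nlinarith [mul_pos h (sub_pos.2 hAcV), mul_nonneg hb (sub_pos.2 hBcV).le]
      · have ha0 : a = 0 := le_antisymm h ha
        have hb1 : b = 1 := by linarith
        rw [ha0, hb1] at hVs ⊢
        simp only [zero_mul, one_mul, zero_add] at hVs ⊢
        linarith
    have hex : ∀ k, ∃ u, 0 < u ∧ V K H (pt (a • x + b • y) k u) = a * cA + b * cB :=
      fun k => root_exists gd _ k hsc
    choose T hTpos hTroot using hex
    apply value_le hK gd _ _ T hsc hTpos hTroot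
    have hTlb : ∀ k, a * tA k + b * tB k ≤ T k := by
      intro k
      by_contra h
      push_neg at h
      have hcomb : 0 < a * tA k + b * tB k := combo_pos ha hb hab (hApos k) (hBpos k)
      have hup : V K H (pt (a • x + b • y) k (a * tA k + b * tB k)) ≤ a * cA + b * cB := by
        have hpt : pt (a • x + b • y) k (a * tA k + b * tB k)
            = a • pt x k (tA k) + b • pt y k (tB k) := by
          funext j
          by_cases hj : j = k <;> simp [pt, hj, smul_eq_mul] <;> ring
        rw [hpt]
        have hcv := gd.convex.2 (Set.mem_univ (pt x k (tA k)))
          (Set.mem_univ (pt y k (tB k))) ha hb hab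
        simp only [smul_eq_mul] at hcv
        rw [hAroot k, hBroot k] at hcv
        exact hcv
      have hdn : a * cA + b * cB ≤ V K H (pt (a • x + b • y) k (a * tA k + b * tB k)) := by
        rw [← hTroot k]; exact mono_pt gd _ k h.le
      have heq := le_antisymm hup hdn
      have := root_unique gd _ k hsc (hTpos k).le hcomb.le (hTroot k) heq
      linarith
    calc ∑ k, 1 / T k ≤ ∑ k, 1 / (a * tA k + b * tB k) := Finset.sum_le_sum
          (fun k _ => one_div_le_one_div_of_le
            (combo_pos ha hb hab (hApos k) (hBpos k)) (hTlb k))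
      _ ≤ ∑ k, (a * (1 / tA k) + b * (1 / tB k)) := Finset.sum_le_sum
          (fun k _ => one_div_combo ha hb hab (hApos k) (hBpos k))
      _ = a * (∑ k, 1 / tA k) + b * (∑ k, 1 / tB k) := by
          rw [Finset.sum_add_distrib, Finset.mul_sum, Finset.mul_sum]
      _ = a * cA * 0 + (a * 1 + b * 1) := by rw [hAsum, hBsum]; ring
      _ = a * cA * 0 + 1 := by rw [mul_one, mul_one, hab]
      _ = 1 := by ring
  · -- flat
    intro s k t t' ht htt' hflat
    obtain ⟨u, c, hupos, husum, huroot, hucV, huval⟩ := char hK gd (pt s k t)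
    obtain ⟨u', c', hu'pos, hu'sum, hu'root, hu'cV, hu'val⟩ := char hK gd (pt s k t')
    have hcc : c' = c := by rw [← huval, ← hu'val]; exact hflat.symm
    rw [hcc] at hu'root hu'cV hu'val
    have hptpt : ∀ (w : ℝ) (x : ℝ), pt (pt s k w) k x = pt s k (w + x) := by
      intro w x
      funext j
      by_cases hj : j = k <;> simp [pt, hj] <;> ring
    have hk1 : V K H (pt s k (t + u k)) = c := by rw [← hptpt]; exact huroot k
    have hk2 : V K H (pt s k (t' + u' k)) = c := by rw [← hptpt]; exact hu'root k
    have hgoal : ∀ i, i ≠ k → c ≤ s i + (H : ℝ) →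
        ∃ i, i ≠ k ∧ V K (H + 1) (pt s k t) ≤ s i + ((H : ℕ) + 1 : ℕ) := by
      intro i hik hle
      refine ⟨i, hik, ?_⟩
      rw [huval]
      push_cast
      linarith
    rcases lt_trichotomy (t + u k) (t' + u' k) with h | h | h
    · obtain ⟨i, hik, hle⟩ := gd.flat s k (t + u k) (t' + u' k)
        (by have := hupos k; linarith) h (hk1.trans hk2.symm)
      rw [hk1] at hle
      exact hgoal i hik hle
    · -- t + u k = t' + u' k : find other flat coordinate
      have huk : u' k < u k := by linarith
      have hex : ∃ j, j ≠ k ∧ u j < u' j := by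
        by_contra hcon
        push_neg at hcon
        have hlt : ∑ j, 1 / u j < ∑ j, 1 / u' j := by
          apply Finset.sum_lt_sum
          · intro j _
            by_cases hj : j = k
            · subst hj
              exact (one_div_lt_one_div_of_lt (hu'pos j) huk).le
            · exact one_div_le_one_div_of_le (hu'pos j) (hcon j hj)
          · exact ⟨k, Finset.mem_univ k, one_div_lt_one_div_of_lt (hu'pos k) huk⟩
        rw [husum, hu'sum] at hlt
        linarith
      obtain ⟨j, hjk, hujj⟩ := hex
      have hA : V K H (pt (pt s k t') j (u' j)) = c := hu'root j
      have hB : V K H (pt (pt s k t') j (u j)) = c := by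
        apply le_antisymm
        · calc V K H (pt (pt s k t') j (u j))
              ≤ V K H (pt (pt s k t') j (u' j)) := mono_pt gd _ j hujj.le
            _ = c := hA
        · calc c = V K H (pt (pt s k t) j (u j)) := (huroot j).symm
            _ ≤ V K H (pt (pt s k t') j (u j)) := by
                apply gd.mono
                intro i
                have hcase : (if i = k then t else 0) ≤ (if i = k then t' else 0) := by
                  split <;> linarith
                simp only [pt]
                linarith
      obtain ⟨i, hij, hle⟩ := gd.flat (pt s k t') j (u j) (u' j) (hupos j).le hujj
        (hB.trans hA.symm)
      rw [hB] at hle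
      by_cases hik : i = k
      · exfalso
        have h2 := hlower (pt s k t') k
        rw [hu'val, pt_apply_self] at h2
        rw [hik] at hle
        rw [pt_apply_self] at hle
        linarith
      · have hsi : pt s k t' i = s i := by simp [pt, hik]
        rw [hsi] at hle
        exact hgoal i hik hle
    · obtain ⟨i, hik, hle⟩ := gd.flat s k (t' + u' k) (t + u k)
        (by have := hu'pos k; linarith) h (hk2.trans hk1.symm)
      rw [hk2] at hle
      exact hgoal i hik hle

lemma good_all (hK : 0 < K) : ∀ H : ℕ, Good K H
  | 0 => good_zero hK
  | (H + 1) => good_succ hK (good_all hK H)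

end roots
end UEO


/-- There is a unique interior point `r*` of the simplex that equalizes the value
function over all decisive bets. -/
theorem unique_equalizing_odds (K H : ℕ) (hK : 1 ≤ K) (hH : 1 ≤ H) (s : Fin K → ℝ) :
    ∃! r : Fin K → ℝ, r ∈ simplexInt K ∧
      ∀ k : Fin K,
        V K (H - 1) (fun j => s j + (if j = k then 1 / r k else 0)) = V K H s := by
  obtain ⟨m, rfl⟩ : ∃ m, H = m + 1 := ⟨H - 1, (Nat.succ_pred_eq_of_pos hH).symm⟩
  have hK0 : 0 < K := hK
  have gd := UEO.good_all hK0 m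
  obtain ⟨t, c, htpos, hsum, hroot, hcV, hval⟩ := UEO.char hK0 gd s
  refine ⟨fun k => 1 / t k, ⟨⟨fun k => one_div_pos.2 (htpos k), hsum⟩, ?_⟩, ?_⟩
  · intro k
    simp only [Nat.add_sub_cancel]
    have h1 : (fun j => s j + if j = k then 1 / ((fun k => 1 / t k) k) else 0)
        = UEO.pt s k (t k) := by
      funext j
      by_cases hj : j = k <;> simp [UEO.pt, hj, one_div_one_div]
    rw [h1, hroot k, hval]
  · rintro r ⟨hr, hreq⟩
    funext k
    have hroot' : V K m (UEO.pt s k (1 / r k)) = c := by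
      have h := hreq k
      simp only [Nat.add_sub_cancel] at h
      rw [hval] at h
      exact h
    have huniq := UEO.root_unique gd s k hcV (one_div_pos.2 (hr.1 k)).le (htpos k).le
      hroot' (hroot k)
    show r k = 1 / t k
    rw [← huniq, one_div_one_div]
end
end
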